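/- arXiv:2206.06001 — 11 statements merged into one kernel-verified Lean document; each statement's English description precedes it below -/
import Mathlib

section
/- Let N ≥ 1 and let â ∈ ℂ^N satisfy ‖â‖² = N, and let ε, η₁, η₂ be reals with 0 < ε < N, η₁ > 0, η₂ > 0. Define the (N+1)×(N+1) Hermitian matrices A₁ = [[I_N, −â],[−â^H, ‖â‖² − ε]], A₂ = [[I_N, 0],[0, 0]], A₃ = [[0, 0],[0, 1]] (written in 2×2 block form with top-left block of size N×N). Then there exists a Hermitian positive definite (N+1)×(N+1) matrix X such that tr(A₁X) < 0, N − η₁ < tr(A₂X) < N + η₂, and tr(A₃X) = 1; i.e., the primal semidefinite program is strictly feasible. -/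
open Matrix
open scoped ComplexOrder

/-- Squared Euclidean norm of a complex vector. -/
noncomputable def nsq {N : ℕ} (a : Fin N → ℂ) : ℝ := ∑ i, Complex.normSq (a i)

/-- The `(N+1) × (N+1)` Hermitian block matrix `[[A, b], [bᴴ, c]]`. -/
noncomputable def blk {N : ℕ} (A : Matrix (Fin N) (Fin N) ℂ) (b : Fin N → ℂ) (c : ℝ) :
    Matrix (Fin N ⊕ Fin 1) (Fin N ⊕ Fin 1) ℂ :=
  Matrix.fromBlocks A (Matrix.of fun i _ => b i) (Matrix.of fun _ j => star (b j))
    (Matrix.of fun _ _ => (c : ℂ))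

lemma trace_mul_vmv {n : Type*} [Fintype n] (M : Matrix n n ℂ) (v w : n → ℂ) :
    Matrix.trace (M * Matrix.vecMulVec v w) = w ⬝ᵥ (M *ᵥ v) := by
  simp only [Matrix.trace, Matrix.diag, Matrix.mul_apply, Matrix.vecMulVec_apply,
    dotProduct, Matrix.mulVec, Finset.mul_sum]
  exact Finset.sum_congr rfl fun i _ => Finset.sum_congr rfl fun j _ => by ring

lemma smul_vmv_psd {n : Type*} [Fintype n] (c : ℝ) (hc : 0 ≤ c) (v : n → ℂ) :
    ((c:ℂ) • Matrix.vecMulVec v (star v)).PosSemidef := by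
  rw [Matrix.posSemidef_iff_dotProduct_mulVec]
  constructor
  · ext i j
    simp only [Matrix.conjTranspose_apply, Matrix.smul_apply, Matrix.vecMulVec_apply,
      Pi.star_apply, star_mul', smul_eq_mul, Complex.star_def, Complex.conj_conj,
      Complex.conj_ofReal]
    ring
  · intro x
    have key : star x ⬝ᵥ (((c:ℂ) • Matrix.vecMulVec v (star v)) *ᵥ x)
        = (c:ℂ) * (star (star v ⬝ᵥ x) * (star v ⬝ᵥ x)) := by
      simp only [Matrix.mulVec, dotProduct, Matrix.smul_apply, Matrix.vecMulVec_apply,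
        Pi.star_apply, smul_eq_mul, star_sum, star_mul', Complex.star_def, Complex.conj_conj,
        Finset.mul_sum, Finset.sum_mul]
      rw [Finset.sum_comm]
      exact Finset.sum_congr rfl fun i _ => Finset.sum_congr rfl fun j _ => by ring
    rw [key]
    exact mul_nonneg (by exact_mod_cast hc) (star_mul_self_nonneg _)

lemma smul_one_pd {n : Type*} [Fintype n] [DecidableEq n] (c : ℝ) (hc : 0 < c) :
    ((c:ℂ) • (1 : Matrix n n ℂ)).PosDef := by
  rw [smul_one_eq_diagonal]
  exact Matrix.posDef_diagonal_iff.mpr fun i => by exact_mod_cast hc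

lemma trace_blk {N : ℕ} (A : Matrix (Fin N) (Fin N) ℂ) (b : Fin N → ℂ) (c : ℝ) :
    Matrix.trace (blk A b c) = Matrix.trace A + (c:ℂ) := by
  simp [blk, Matrix.trace, Fintype.sum_sum_type, Matrix.diag]

/-- Strict feasibility of the primal SDP relaxation: with
`A₁ = [[I, −â],[−âᴴ, ‖â‖² − ε]]`, `A₂ = [[I, 0],[0, 0]]`, `A₃ = [[0,0],[0,1]]`,
there is a Hermitian positive definite `X` with `tr(A₁X) < 0`,
`N − η₁ < tr(A₂X) < N + η₂` and `tr(A₃X) = 1`. -/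
theorem stmt_0 {N : ℕ} (hN : 1 ≤ N) (ahat : Fin N → ℂ) (ha : nsq ahat = N)
    (ε η₁ η₂ : ℝ) (hε0 : 0 < ε) (hεN : ε < N) (hη₁ : 0 < η₁) (hη₂ : 0 < η₂) :
    ∃ X : Matrix (Fin N ⊕ Fin 1) (Fin N ⊕ Fin 1) ℂ, X.PosDef ∧
      (Matrix.trace (blk 1 (-ahat) (nsq ahat - ε) * X)).re < 0 ∧
      (N : ℝ) - η₁ < (Matrix.trace (blk 1 0 0 * X)).re ∧
      (Matrix.trace (blk 1 0 0 * X)).re < (N : ℝ) + η₂ ∧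
      Matrix.trace (blk 0 0 1 * X) = 1 := by
  have hN0 : (0:ℝ) < N := by exact_mod_cast Nat.lt_of_lt_of_le Nat.zero_lt_one hN
  set δ : ℝ := ε / (4 * N) with hδ
  have hδ0 : 0 < δ := div_pos hε0 (by linarith)
  have hδ1 : δ < 1 := by
    rw [hδ, div_lt_one (by linarith)]; linarith
  set v : Fin N ⊕ Fin 1 → ℂ := Sum.elim ahat (fun _ => 1) with hv
  set X : Matrix (Fin N ⊕ Fin 1) (Fin N ⊕ Fin 1) ℂ :=
    (((1 - δ : ℝ) : ℂ) • Matrix.vecMulVec v (star v)) + ((δ : ℝ) : ℂ) • 1 with hX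
  -- key sum identity
  have hS : (∑ i, (starRingEnd ℂ) (ahat i) * ahat i) = ((N : ℝ) : ℂ) := by
    have : ∀ i, (starRingEnd ℂ) (ahat i) * ahat i = ((Complex.normSq (ahat i) : ℝ) : ℂ) := by
      intro i; rw [Complex.normSq_eq_conj_mul_self]
    rw [Finset.sum_congr rfl fun i _ => this i, ← Complex.ofReal_sum]
    exact_mod_cast congrArg (Complex.ofReal ·) ha
  -- trace formula
  have hS' : (∑ i, ahat i * (starRingEnd ℂ) (ahat i)) = ((N : ℝ) : ℂ) := by
    rw [← hS]; exact Finset.sum_congr rfl fun i _ => mul_comm _ _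
  have htr : ∀ (A : Matrix (Fin N) (Fin N) ℂ) (b : Fin N → ℂ) (c : ℝ),
      Matrix.trace (blk A b c * X)
        = ((1 - δ : ℝ) : ℂ) * (star v ⬝ᵥ (blk A b c *ᵥ v))
          + ((δ : ℝ) : ℂ) * Matrix.trace (blk A b c) := by
    intro A b c
    rw [hX, Matrix.mul_add, Matrix.trace_add, Matrix.mul_smul, Matrix.trace_smul,
      Matrix.mul_smul, Matrix.mul_one, Matrix.trace_smul, trace_mul_vmv]
    simp [smul_eq_mul]
  -- the three quadratic forms
  have hq1 : star v ⬝ᵥ (blk 1 (-ahat) (nsq ahat - ε) *ᵥ v) = ((-ε : ℝ) : ℂ) := by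
    simp [dotProduct, Matrix.mulVec, Fintype.sum_sum_type, blk, Complex.star_def,
      Matrix.one_apply, Finset.mul_sum, mul_comm, mul_add, Finset.sum_add_distrib,
      sub_eq_add_neg, hv, hS, hS', ha]
  have hq2 : star v ⬝ᵥ (blk 1 0 0 *ᵥ v) = ((N : ℝ) : ℂ) := by
    simp [dotProduct, Matrix.mulVec, Fintype.sum_sum_type, blk, Complex.star_def,
      Matrix.one_apply, Finset.mul_sum, mul_comm, hv, hS, hS']
  have hq3 : star v ⬝ᵥ (blk 0 0 1 *ᵥ v) = 1 := by
    simp [dotProduct, Matrix.mulVec, Fintype.sum_sum_type, blk, Complex.star_def, hv]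
  -- the three traces of the blk matrices
  have ht1 : Matrix.trace (blk (1 : Matrix (Fin N) (Fin N) ℂ) (-ahat) (nsq ahat - ε))
      = ((N + (N - ε) : ℝ) : ℂ) := by
    rw [trace_blk, Matrix.trace_one, ha]; simp only [Fintype.card_fin]; push_cast; ring
  have ht2 : Matrix.trace (blk (1 : Matrix (Fin N) (Fin N) ℂ) 0 0) = ((N : ℝ) : ℂ) := by
    rw [trace_blk, Matrix.trace_one]; simp only [Fintype.card_fin]; push_cast; ring
  have ht3 : Matrix.trace (blk (0 : Matrix (Fin N) (Fin N) ℂ) 0 1) = 1 := by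
    rw [trace_blk, Matrix.trace_zero]; push_cast; ring
  refine ⟨X, ?_, ?_, ?_, ?_, ?_⟩
  · exact Matrix.PosDef.posSemidef_add (smul_vmv_psd (1 - δ) (by linarith) v)
      (smul_one_pd δ hδ0)
  · rw [htr, hq1, ht1]
    have : ((1 - δ : ℝ) : ℂ) * ((-ε : ℝ) : ℂ) + ((δ : ℝ) : ℂ) * ((N + (N - ε) : ℝ) : ℂ)
        = (((1 - δ) * (-ε) + δ * (N + (N - ε)) : ℝ) : ℂ) := by push_cast; ring
    rw [this, Complex.ofReal_re]
    have h2 : δ * N = ε / 4 := by rw [hδ]; field_simp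
    nlinarith [h2]
  · rw [htr, hq2, ht2]
    have : ((1 - δ : ℝ) : ℂ) * ((N : ℝ) : ℂ) + ((δ : ℝ) : ℂ) * ((N : ℝ) : ℂ)
        = ((N : ℝ) : ℂ) := by push_cast; ring
    rw [this, Complex.ofReal_re]; linarith
  · rw [htr, hq2, ht2]
    have : ((1 - δ : ℝ) : ℂ) * ((N : ℝ) : ℂ) + ((δ : ℝ) : ℂ) * ((N : ℝ) : ℂ)
        = ((N : ℝ) : ℂ) := by push_cast; ring
    rw [this, Complex.ofReal_re]; linarith
  · rw [htr, hq3, ht3]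
    push_cast; ring
end

section
/- Let N ≥ 1, w ∈ ℂ^N, â ∈ ℂ^N, and ε ∈ ℝ. Then there exist reals y₁ < 0, y₂ > 0, y₃ < 0, and y₄ ∈ ℝ such that the (N+1)×(N+1) Hermitian block matrix [[w w^H − (y₁+y₂+y₃) I_N, y₁ â],[y₁ â^H, −y₄ − y₁(‖â‖² − ε)]] is positive definite; i.e., the dual semidefinite program is strictly feasible. -/
open Matrix
open scoped ComplexOrder

lemma aux_vecMulVec_posSemidef {N : ℕ} (w : Fin N → ℂ) :
    (Matrix.vecMulVec w (star w)).PosSemidef := by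
  apply PosSemidef.of_dotProduct_mulVec_nonneg
  · ext i j
    simp [conjTranspose_apply, vecMulVec_apply, mul_comm]
  · intro x
    have h : star x ⬝ᵥ (Matrix.vecMulVec w (star w)) *ᵥ x
        = (star x ⬝ᵥ w) * star (star x ⬝ᵥ w) := by
      simp only [dotProduct, mulVec, vecMulVec_apply, Finset.mul_sum, Finset.sum_mul,
        Pi.star_apply, star_sum, star_mul', star_star, RCLike.star_def, Complex.conj_conj]
      rw [Finset.sum_comm]
      apply Finset.sum_congr rfl; intro i _
      apply Finset.sum_congr rfl; intro j _
      ring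
    rw [h]
    exact mul_star_self_nonneg _

lemma aux_posDef_fromBlocks {m n : Type*} [Fintype m] [Fintype n] [DecidableEq m]
    {A : Matrix m m ℂ} (B : Matrix m n ℂ) (D : Matrix n n ℂ) (hA : A.PosDef) [Invertible A]
    (hS : (D - Bᴴ * A⁻¹ * B).PosDef) : (fromBlocks A B Bᴴ D).PosDef := by
  refine .of_dotProduct_mulVec_pos ((Matrix.IsHermitian.fromBlocks₁₁ B D hA.1).2 hS.1) fun x hx => ?_
  rw [dotProduct_mulVec, ← Sum.elim_comp_inl_inr x, schur_complement_eq₁₁ B D _ _ hA.1]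
  by_cases hy : x ∘ Sum.inr = 0
  · have hxl : x ∘ Sum.inl ≠ 0 := by
      intro h
      apply hx
      rw [← Sum.elim_comp_inl_inr x, h, hy]
      ext (i | i) <;> rfl
    apply add_pos_of_pos_of_nonneg
    · rw [← dotProduct_mulVec]
      apply hA.dotProduct_mulVec_pos
      simpa [hy] using hxl
    · rw [← dotProduct_mulVec]
      exact hS.posSemidef.dotProduct_mulVec_nonneg _
  · apply add_pos_of_nonneg_of_pos
    · rw [← dotProduct_mulVec]
      exact hA.posSemidef.dotProduct_mulVec_nonneg _
    · rw [← dotProduct_mulVec]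
      exact hS.dotProduct_mulVec_pos hy

/-- Strict feasibility of the dual SDP: there exist `y₁ < 0`, `y₂ > 0`, `y₃ < 0`, `y₄ ∈ ℝ`
such that `[[w wᴴ − (y₁+y₂+y₃) I, y₁ â],[y₁ âᴴ, −y₄ − y₁(‖â‖² − ε)]]` is positive definite. -/
theorem stmt_1 {N : ℕ} (hN : 1 ≤ N) (w ahat : Fin N → ℂ) (ε : ℝ) :
    ∃ y₁ y₂ y₃ y₄ : ℝ, y₁ < 0 ∧ 0 < y₂ ∧ y₃ < 0 ∧
      (blk (Matrix.vecMulVec w (star w) - ((y₁ + y₂ + y₃ : ℝ) : ℂ) • 1)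
        ((y₁ : ℂ) • ahat) (-y₄ - y₁ * (nsq ahat - ε))).PosDef := by
  set A : Matrix (Fin N) (Fin N) ℂ :=
    Matrix.vecMulVec w (star w) - (((-2 : ℝ) + 1 + -2 : ℝ) : ℂ) • 1 with hAdef
  set b : Fin N → ℂ := ((-2 : ℝ) : ℂ) • ahat with hbdef
  set B : Matrix (Fin N) (Fin 1) ℂ := Matrix.of fun i _ => b i with hBdef
  have hA : A.PosDef := by
    have hA3 : A = Matrix.vecMulVec w (star w) + (3 : ℂ) • 1 := by
      rw [hAdef]
      push_cast
      module
    rw [hA3, smul_one_eq_diagonal]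
    exact Matrix.PosDef.posSemidef_add (aux_vecMulVec_posSemidef w)
      (posDef_diagonal_iff.2 fun _ => by norm_num)
  have : Invertible A := hA.isUnit.invertible
  set r : ℂ := (Bᴴ * A⁻¹ * B) 0 0 with hrdef
  have hr : 0 ≤ r := by
    have h := hA.inv.posSemidef.dotProduct_mulVec_nonneg b
    have heq : r = star b ⬝ᵥ A⁻¹ *ᵥ b := by
      simp only [hrdef, hBdef, Matrix.mul_apply, dotProduct, mulVec, conjTranspose_apply,
        of_apply, Finset.mul_sum, Finset.sum_mul, Pi.star_apply, RCLike.star_def]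
      rw [Finset.sum_comm]
      apply Finset.sum_congr rfl; intro i _
      apply Finset.sum_congr rfl; intro j _
      ring
    rw [heq]; exact h
  rw [Complex.nonneg_iff] at hr
  have hrre : r = (r.re : ℂ) := by
    rw [Complex.ext_iff]
    simp [hr.2]
  set c : ℝ := r.re + 1 with hcdef
  refine ⟨-2, 1, -2, -c - (-2) * (nsq ahat - ε), by norm_num, by norm_num, by norm_num, ?_⟩
  have hc : -(-c - (-2) * (nsq ahat - ε)) - (-2) * (nsq ahat - ε) = c := by ring
  rw [hc]
  have hS : ((Matrix.of fun _ _ => (c : ℂ)) - Bᴴ * A⁻¹ * B).PosDef := by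
    have hone : ((Matrix.of fun (_ _ : Fin 1) => (c : ℂ)) - Bᴴ * A⁻¹ * B)
        = (1 : Matrix (Fin 1) (Fin 1) ℂ) := by
      ext i j
      have hi : i = 0 := Subsingleton.elim _ _
      have hj : j = 0 := Subsingleton.elim _ _
      subst hi hj
      simp only [Matrix.sub_apply, of_apply, one_apply_eq, ← hrdef]
      rw [hrre, hcdef]
      push_cast
      ring
    rw [hone]
    exact Matrix.PosDef.one
  have hfb : blk A b c = fromBlocks A B Bᴴ (Matrix.of fun _ _ => (c : ℂ)) := by
    unfold blk
    have h2 : (Matrix.of fun (_ : Fin 1) j => star (b j)) = Bᴴ := by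
      ext i j
      simp [hBdef, conjTranspose_apply]
    rw [h2, ← hBdef]
  rw [hfb]
  exact aux_posDef_fromBlocks B _ hA hS
end

section
/- (Proposition 1.) Under the stated primal feasibility, dual feasibility, complementary slackness conditions, and z₀ > 0, the following hold: (1) y₁ < 0; (2) y₂ y₃ = 0; (3) if y₁ + y₂ + y₃ = 0, then y₁ = −y₂ and y₃ = 0. -/
open Matrix
open scoped ComplexOrder

lemma aux_diag_nonneg {n : Type*} [Fintype n] [DecidableEq n] {M : Matrix n n ℂ}
    (h : M.PosSemidef) (i : n) : 0 ≤ M i i := by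
  exact h.diag_nonneg

lemma aux_trace_nonneg {n : Type*} [Fintype n] [DecidableEq n] {M : Matrix n n ℂ}
    (h : M.PosSemidef) : 0 ≤ M.trace :=
  Finset.sum_nonneg fun i _ => aux_diag_nonneg h i

open scoped MatrixOrder in
lemma aux_trace_mul_nonneg {n : Type*} [Fintype n] [DecidableEq n]
    {A B : Matrix n n ℂ} (hA : A.PosSemidef) (hB : B.PosSemidef) :
    0 ≤ (A * B).trace := by
  obtain ⟨C, rfl⟩ := CStarAlgebra.nonneg_iff_eq_star_mul_self.mp hA.nonneg
  rw [Matrix.mul_assoc, Matrix.trace_mul_comm]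
  have := aux_trace_nonneg (hB.mul_mul_conjTranspose_same C)
  exact this

lemma blk_submatrix {N : ℕ} (A : Matrix (Fin N) (Fin N) ℂ) (b : Fin N → ℂ) (c : ℝ)
    (h : (blk A b c).PosSemidef) : A.PosSemidef := by
  have := h.submatrix (Sum.inl : Fin N → Fin N ⊕ Fin 1)
  have he : (blk A b c).submatrix Sum.inl Sum.inl = A := by
    ext i j; rfl
  rwa [he] at this

lemma blk_corner {N : ℕ} (A : Matrix (Fin N) (Fin N) ℂ) (b : Fin N → ℂ) (c : ℝ)
    (h : (blk A b c).PosSemidef) : 0 ≤ c := by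
  have := aux_diag_nonneg h (Sum.inr 0)
  have h2 : (blk A b c) (Sum.inr 0) (Sum.inr 0) = (c : ℂ) := rfl
  rw [h2] at this
  exact_mod_cast this

lemma blk_trace_mul {N : ℕ} (A Z : Matrix (Fin N) (Fin N) ℂ) (z₁ : Fin N → ℂ) (c z₀ : ℝ) :
    (blk A 0 c * blk Z z₁ z₀).trace = (A * Z).trace + (c : ℂ) * z₀ := by
  unfold blk
  have hb : (Matrix.of fun (i : Fin N) (_ : Fin 1) => (0 : ℂ)) = (0 : Matrix (Fin N) (Fin 1) ℂ) := by
    ext i j; rfl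
  have hb' : (Matrix.of fun (_ : Fin 1) (j : Fin N) => star ((0 : Fin N → ℂ) j)) = (0 : Matrix (Fin 1) (Fin N) ℂ) := by
    ext i j; simp
  rw [Matrix.fromBlocks_multiply]
  rw [Matrix.trace]
  rw [Fintype.sum_sum_type]
  simp only [Matrix.diag_apply, Matrix.fromBlocks_apply₁₁, Matrix.fromBlocks_apply₂₂]
  simp [hb, hb', Matrix.trace, Matrix.mul_apply, Fin.sum_univ_one]

/-- Proposition 1: under primal feasibility, dual feasibility, complementary slackness and
`z₀ > 0`, one has (1) `y₁ < 0`; (2) `y₂ y₃ = 0`; (3) if `y₁+y₂+y₃ = 0` then `y₁ = −y₂`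
and `y₃ = 0`. -/
theorem stmt_3 {N : ℕ} (hN : 1 ≤ N) (ahat : Fin N → ℂ) (ha : nsq ahat = N)
    (ε η₁ η₂ : ℝ) (hε0 : 0 < ε) (hεN : ε < N) (hη₁0 : 0 ≤ η₁) (hη₁N : η₁ < N)
    (hη₂ : 0 ≤ η₂) (hηsum : 0 < η₁ + η₂)
    (Rhat : Matrix (Fin N) (Fin N) ℂ) (hR : Rhat.IsHermitian)
    (W : Matrix (Fin N) (Fin N) ℂ) (y₁ y₂ y₃ y₄ : ℝ)
    (Z : Matrix (Fin N) (Fin N) ℂ) (z₁ : Fin N → ℂ) (z₀ x : ℝ)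
    -- primal feasibility
    (hW : W.PosSemidef) (hy₁ : y₁ ≤ 0) (hy₂ : 0 ≤ y₂) (hy₃ : y₃ ≤ 0)
    (hlin : ((N : ℝ) - η₁) * y₂ + ((N : ℝ) + η₂) * y₃ + y₄ = 1)
    (hysum : y₁ + y₂ + y₃ ≤ 0)
    (hQ : (blk (W - ((y₁ + y₂ + y₃ : ℝ) : ℂ) • 1) ((y₁ : ℂ) • ahat)
        (-y₄ - y₁ * (nsq ahat - ε))).PosSemidef)
    -- dual feasibility
    (hZ : Z.IsHermitian) (hRZ : (Rhat - Z).PosSemidef)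
    (hd1 : (Matrix.trace Z).re - 2 * (star ahat ⬝ᵥ z₁).re + z₀ * (nsq ahat - ε) ≤ x)
    (hd2 : (Matrix.trace Z).re - ((N : ℝ) - η₁) * z₀ ≥ x)
    (hd3 : (Matrix.trace Z).re - ((N : ℝ) + η₂) * z₀ ≤ x)
    (hZblk : (blk Z z₁ z₀).PosSemidef) (hx : x ≤ 0)
    -- complementary slackness
    (hc1 : Matrix.trace ((Rhat - Z) * W) = 0)
    (hc2 : y₁ * ((Matrix.trace Z).re - 2 * (star ahat ⬝ᵥ z₁).re + z₀ * (nsq ahat - ε) - x) = 0)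
    (hc3 : y₂ * ((Matrix.trace Z).re - ((N : ℝ) - η₁) * z₀ - x) = 0)
    (hc4 : y₃ * ((Matrix.trace Z).re - ((N : ℝ) + η₂) * z₀ - x) = 0)
    (hc5 : (y₁ + y₂ + y₃) * x = 0)
    (hc6 : Matrix.trace ((blk (W - ((y₁ + y₂ + y₃ : ℝ) : ℂ) • 1) ((y₁ : ℂ) • ahat)
        (-y₄ - y₁ * (nsq ahat - ε))) * (blk Z z₁ z₀)) = 0)
    -- zero duality gap and positive optimal value
    (hz₀ : z₀ = (Matrix.trace (Rhat * W)).re) (hz₀pos : 0 < z₀) :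
    y₁ < 0 ∧ y₂ * y₃ = 0 ∧ (y₁ + y₂ + y₃ = 0 → y₁ = -y₂ ∧ y₃ = 0) := by
  -- Part 2
  have part2 : y₂ * y₃ = 0 := by
    by_contra h
    have h2 : y₂ ≠ 0 := fun h0 => h (by rw [h0]; ring)
    have h3 : y₃ ≠ 0 := fun h0 => h (by rw [h0]; ring)
    have e2 : (Matrix.trace Z).re - ((N : ℝ) - η₁) * z₀ - x = 0 :=
      (mul_eq_zero.mp hc3).resolve_left h2
    have e3 : (Matrix.trace Z).re - ((N : ℝ) + η₂) * z₀ - x = 0 :=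
      (mul_eq_zero.mp hc4).resolve_left h3
    nlinarith [mul_pos hηsum hz₀pos]
  -- Part 1
  have part1 : y₁ < 0 := by
    by_contra h1
    have hy10 : y₁ = 0 := le_antisymm hy₁ (not_lt.mp h1)
    rw [hy10] at hQ hc6 hysum
    simp only [Complex.ofReal_zero, zero_smul, zero_mul, sub_zero, zero_add] at hQ hc6 hysum
    have hA := blk_submatrix _ _ _ hQ
    have hZpsd := blk_submatrix _ _ _ hZblk
    have hcnn : (0 : ℝ) ≤ -y₄ := blk_corner _ _ _ hQ
    rw [blk_trace_mul] at hc6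
    have t1 : 0 ≤ ((W - ((y₂ + y₃ : ℝ) : ℂ) • 1) * Z).trace := aux_trace_mul_nonneg hA hZpsd
    have t2 : 0 ≤ ((-y₄ : ℝ) : ℂ) * (z₀ : ℂ) := by
      have : ((-y₄ : ℝ) : ℂ) * (z₀ : ℂ) = (((-y₄) * z₀ : ℝ) : ℂ) := by push_cast; ring
      rw [this]
      exact_mod_cast mul_nonneg hcnn hz₀pos.le
    have t3 : ((-y₄ : ℝ) : ℂ) * (z₀ : ℂ) = 0 := by
      have hle : ((-y₄ : ℝ) : ℂ) * (z₀ : ℂ) ≤ 0 := by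
        have : ((-y₄ : ℝ) : ℂ) * (z₀ : ℂ) = -(((W - ((y₂ + y₃ : ℝ) : ℂ) • 1) * Z).trace) := by
          linear_combination hc6
        rw [this]
        exact neg_nonpos_of_nonneg t1
      exact le_antisymm hle t2
    have hy4 : y₄ = 0 := by
      have : ((((-y₄) * z₀ : ℝ)) : ℂ) = 0 := by push_cast at t3 ⊢; linear_combination t3
      have h0 : (-y₄) * z₀ = 0 := by exact_mod_cast this
      rcases mul_eq_zero.mp h0 with h | h
      · linarith
      · linarith
    have hN1 : (0 : ℝ) < (N : ℝ) - η₁ := by linarith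
    nlinarith [mul_nonpos_of_nonneg_of_nonpos hN1.le hysum,
      mul_nonpos_of_nonneg_of_nonpos hηsum.le hy₃]
  refine ⟨part1, part2, fun h0 => ?_⟩
  have hy2pos : 0 < y₂ := by linarith
  have hy30 : y₃ = 0 := (mul_eq_zero.mp part2).resolve_left (ne_of_gt hy2pos)
  exact ⟨by linarith, hy30⟩
end

section
/- (Proposition 2.) Under the stated primal feasibility, dual feasibility, complementary slackness conditions, and z₀ > 0, the following hold: (1) z₀(‖â‖² − ε) = 2Re(â^H z₁) − (tr Z − x), and if y₄ ≠ 1 then z₀(1 − y₄) = y₁ x + (y₂ + y₃) tr Z; (2) −y₄ − y₁(‖â‖² − ε) > 0; (3) if y₁ + y₂ + y₃ = 0, then y₂ > 1/(2N − ε − η₁). -/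
open Matrix
open scoped ComplexOrder

lemma trace_blk_mul {N : ℕ} (A Z : Matrix (Fin N) (Fin N) ℂ) (b z : Fin N → ℂ) (c w : ℝ) :
    Matrix.trace (blk A b c * blk Z z w)
      = Matrix.trace (A * Z) + (∑ i, b i * star (z i)) + (∑ i, star (b i) * z i)
        + ((c * w : ℝ) : ℂ) := by
  simp only [blk, Matrix.fromBlocks_multiply, Matrix.trace, Matrix.diag,
    Fintype.sum_sum_type, Matrix.fromBlocks_apply₁₁, Matrix.fromBlocks_apply₂₂,
    Matrix.fromBlocks_apply₁₂, Matrix.fromBlocks_apply₂₁,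
    Matrix.add_apply, Matrix.mul_apply, Matrix.of_apply, Fin.sum_univ_one,
    Finset.sum_add_distrib]
  push_cast
  ring

lemma quad_blk {N : ℕ} (A : Matrix (Fin N) (Fin N) ℂ) (b : Fin N → ℂ) (c : ℝ)
    (u : Fin N → ℂ) (β : ℂ) :
    star (Sum.elim u fun _ : Fin 1 => β) ⬝ᵥ (blk A b c) *ᵥ (Sum.elim u fun _ : Fin 1 => β)
      = star u ⬝ᵥ A *ᵥ u + (star u ⬝ᵥ b) * β + star β * (star b ⬝ᵥ u) + star β * β * c := by
  have hs : star (Sum.elim u fun _ : Fin 1 => β)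
      = Sum.elim (star u) (fun _ : Fin 1 => star β) := by
    funext i; cases i <;> rfl
  rw [hs, blk, Matrix.fromBlocks_mulVec, sumElim_dotProduct_sumElim]
  simp only [Matrix.mulVec, dotProduct, Matrix.of_apply, Fin.sum_univ_one,
    Pi.add_apply, Pi.star_apply, Finset.sum_add_distrib, Finset.mul_sum, Finset.sum_mul,
    Function.comp, Sum.elim_inl, Sum.elim_inr]
  ring_nf
  simp only [Finset.sum_add_distrib, Finset.mul_sum]
  ring_nf


set_option maxHeartbeats 1000000 in
/-- Proposition 2: under primal feasibility, dual feasibility, complementary slackness and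
`z₀ > 0`, one has (1) `z₀(‖â‖²−ε) = 2Re(âᴴz₁) − (tr Z − x)` and, for `y₄ ≠ 1`,
`z₀(1−y₄) = y₁x + (y₂+y₃)tr Z`; (2) `−y₄ − y₁(‖â‖²−ε) > 0`; (3) if `y₁+y₂+y₃ = 0`
then `y₂ > 1/(2N − ε − η₁)`. -/
theorem stmt_4 {N : ℕ} (hN : 1 ≤ N) (ahat : Fin N → ℂ) (ha : nsq ahat = N)
    (ε η₁ η₂ : ℝ) (hε0 : 0 < ε) (hεN : ε < N) (hη₁0 : 0 ≤ η₁) (hη₁N : η₁ < N)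
    (hη₂ : 0 ≤ η₂) (hηsum : 0 < η₁ + η₂)
    (Rhat : Matrix (Fin N) (Fin N) ℂ) (hR : Rhat.IsHermitian)
    (W : Matrix (Fin N) (Fin N) ℂ) (y₁ y₂ y₃ y₄ : ℝ)
    (Z : Matrix (Fin N) (Fin N) ℂ) (z₁ : Fin N → ℂ) (z₀ x : ℝ)
    -- primal feasibility
    (hW : W.PosSemidef) (hy₁ : y₁ ≤ 0) (hy₂ : 0 ≤ y₂) (hy₃ : y₃ ≤ 0)
    (hlin : ((N : ℝ) - η₁) * y₂ + ((N : ℝ) + η₂) * y₃ + y₄ = 1)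
    (hysum : y₁ + y₂ + y₃ ≤ 0)
    (hQ : (blk (W - ((y₁ + y₂ + y₃ : ℝ) : ℂ) • 1) ((y₁ : ℂ) • ahat)
        (-y₄ - y₁ * (nsq ahat - ε))).PosSemidef)
    -- dual feasibility
    (hZ : Z.IsHermitian) (hRZ : (Rhat - Z).PosSemidef)
    (hd1 : (Matrix.trace Z).re - 2 * (star ahat ⬝ᵥ z₁).re + z₀ * (nsq ahat - ε) ≤ x)
    (hd2 : (Matrix.trace Z).re - ((N : ℝ) - η₁) * z₀ ≥ x)
    (hd3 : (Matrix.trace Z).re - ((N : ℝ) + η₂) * z₀ ≤ x)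
    (hZblk : (blk Z z₁ z₀).PosSemidef) (hx : x ≤ 0)
    -- complementary slackness
    (hc1 : Matrix.trace ((Rhat - Z) * W) = 0)
    (hc2 : y₁ * ((Matrix.trace Z).re - 2 * (star ahat ⬝ᵥ z₁).re + z₀ * (nsq ahat - ε) - x) = 0)
    (hc3 : y₂ * ((Matrix.trace Z).re - ((N : ℝ) - η₁) * z₀ - x) = 0)
    (hc4 : y₃ * ((Matrix.trace Z).re - ((N : ℝ) + η₂) * z₀ - x) = 0)
    (hc5 : (y₁ + y₂ + y₃) * x = 0)
    (hc6 : Matrix.trace ((blk (W - ((y₁ + y₂ + y₃ : ℝ) : ℂ) • 1) ((y₁ : ℂ) • ahat)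
        (-y₄ - y₁ * (nsq ahat - ε))) * (blk Z z₁ z₀)) = 0)
    -- zero duality gap and positive optimal value
    (hz₀ : z₀ = (Matrix.trace (Rhat * W)).re) (hz₀pos : 0 < z₀) :
    z₀ * (nsq ahat - ε) = 2 * (star ahat ⬝ᵥ z₁).re - ((Matrix.trace Z).re - x) ∧
    (y₄ ≠ 1 → z₀ * (1 - y₄) = y₁ * x + (y₂ + y₃) * (Matrix.trace Z).re) ∧
    0 < -y₄ - y₁ * (nsq ahat - ε) ∧
    (y₁ + y₂ + y₃ = 0 → y₂ > 1 / (2 * (N : ℝ) - ε - η₁)) := by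
  have hNpos : (0:ℝ) < N := by exact_mod_cast Nat.lt_of_lt_of_le Nat.zero_lt_one hN
  have haN : star ahat ⬝ᵥ ahat = (N : ℂ) := by
    have h : ((nsq ahat : ℝ) : ℂ) = (N : ℂ) := by rw [ha]; norm_cast
    rw [← h, nsq, dotProduct]
    push_cast
    refine Finset.sum_congr rfl fun i _ => ?_
    simp [Complex.normSq_eq_conj_mul_self, Complex.star_def]
  rw [ha] at hd1 hc2 hQ hc6 ⊢
  -- Z is PSD, trace nonneg
  have hZsub : (blk Z z₁ z₀).submatrix Sum.inl Sum.inl = Z := by ext i j; rfl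
  have hZpsd : Z.PosSemidef := hZsub ▸ hZblk.submatrix Sum.inl
  have hTnn : 0 ≤ (Matrix.trace Z).re := by
    rw [Matrix.trace, Complex.re_sum]
    refine Finset.sum_nonneg fun i _ => ?_
    have h := hZpsd.dotProduct_mulVec_nonneg (Pi.single i 1)
    have h2 : star (Pi.single i 1 : Fin N → ℂ) ⬝ᵥ Z *ᵥ Pi.single i 1 = Z.diag i := by
      simp [dotProduct, Matrix.mulVec, Pi.single_apply, Finset.mul_sum]
    rw [h2] at h
    exact (Complex.le_def.mp h).1
  -- the corner entry is nonnegative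
  have hccnn : (0:ℝ) ≤ -y₄ - y₁ * ((N:ℝ) - ε) := by
    have h := hQ.dotProduct_mulVec_nonneg (Sum.elim (0 : Fin N → ℂ) fun _ : Fin 1 => 1)
    rw [quad_blk] at h
    simp only [star_zero, zero_dotProduct, dotProduct_zero, mul_one, star_one,
      one_mul, zero_add, Matrix.mulVec_zero] at h
    exact Complex.zero_le_real.mp h
  -- trace (W*Z) has real part z₀
  have hWZ : (Matrix.trace (W * Z)).re = z₀ := by
    have h1 : Matrix.trace (Rhat * W) = Matrix.trace (Z * W) := by
      have h := hc1
      rw [Matrix.sub_mul, Matrix.trace_sub, sub_eq_zero] at h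
      exact h
    rw [Matrix.trace_mul_comm W Z, ← h1, ← hz₀]
  -- main identity from hc6
  have hb1 : (∑ i, ((y₁:ℂ) • ahat) i * star (z₁ i)) = (y₁:ℂ) * star (star ahat ⬝ᵥ z₁) := by
    simp only [dotProduct, star_sum, star_mul', star_star, Pi.smul_apply, smul_eq_mul,
      Finset.mul_sum, Pi.star_apply]
    exact Finset.sum_congr rfl fun i _ => by ring
  have hb2 : (∑ i, star (((y₁:ℂ) • ahat) i) * z₁ i) = (y₁:ℂ) * (star ahat ⬝ᵥ z₁) := by
    simp only [dotProduct, Pi.smul_apply, smul_eq_mul, star_mul', Pi.star_apply,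
      Finset.mul_sum, Complex.star_def, Complex.conj_ofReal]
    exact Finset.sum_congr rfl fun i _ => by ring
  have hb3 : Matrix.trace ((W - ((y₁ + y₂ + y₃ : ℝ):ℂ) • 1) * Z)
      = Matrix.trace (W * Z) - ((y₁ + y₂ + y₃ : ℝ):ℂ) * Matrix.trace Z := by
    rw [Matrix.sub_mul, Matrix.trace_sub, Matrix.smul_mul, Matrix.one_mul, Matrix.trace_smul,
      smul_eq_mul]
  rw [trace_blk_mul, hb1, hb2, hb3] at hc6
  have hE := congrArg Complex.re hc6
  simp only [Complex.add_re, Complex.sub_re, Complex.re_ofReal_mul, Complex.star_def,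
    Complex.conj_re, Complex.ofReal_re, Complex.zero_re] at hE
  rw [hWZ] at hE
  -- hE : z₀ - (y₁+y₂+y₃) * T + y₁ * D + y₁ * D + (-y₄ - y₁*(N-ε))*z₀ = 0
  have hy₁ne : y₁ ≠ 0 := by
    intro h0
    subst h0
    nlinarith [mul_nonneg hccnn hz₀pos.le,
      mul_nonpos_of_nonpos_of_nonneg hysum hTnn]
  have hy₁lt : y₁ < 0 := lt_of_le_of_ne hy₁ hy₁ne
  have hδ₁ : (Matrix.trace Z).re - 2 * (star ahat ⬝ᵥ z₁).re + z₀ * ((N:ℝ) - ε) - x = 0 := by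
    rcases mul_eq_zero.mp hc2 with h | h
    · exact absurd h hy₁ne
    · exact h
  have hG2 : z₀ * (1 - y₄) = y₁ * x + (y₂ + y₃) * (Matrix.trace Z).re := by
    linear_combination hE + y₁ * hδ₁
  -- the corner entry is nonzero
  have hccne : -y₄ - y₁ * ((N:ℝ) - ε) ≠ 0 := by
    intro h0
    have hApsd : (W - ((y₁ + y₂ + y₃ : ℝ):ℂ) • 1).PosSemidef := by
      have h := hQ.submatrix (Sum.inl : Fin N → Fin N ⊕ Fin 1)
      have e : (blk (W - ((y₁ + y₂ + y₃ : ℝ):ℂ) • 1) ((y₁:ℂ) • ahat)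
          (-y₄ - y₁ * ((N:ℝ) - ε))).submatrix Sum.inl Sum.inl
          = W - ((y₁ + y₂ + y₃ : ℝ):ℂ) • 1 := by ext i j; rfl
      rwa [e] at h
    set K : ℝ := (star ahat ⬝ᵥ (W - ((y₁ + y₂ + y₃ : ℝ):ℂ) • 1) *ᵥ ahat).re with hK
    have hKnn : 0 ≤ K := (Complex.le_def.mp (hApsd.dotProduct_mulVec_nonneg ahat)).1
    set α : ℝ := (-y₁ * N) / (K + 1) with hα
    have hαpos : 0 < α := by
      apply div_pos (by nlinarith) (by linarith)
    have h := hQ.dotProduct_mulVec_nonneg (Sum.elim ((α:ℂ) • ahat) fun _ : Fin 1 => 1)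
    rw [quad_blk] at h
    have e1 : star ((α:ℂ) • ahat) ⬝ᵥ ((W - ((y₁ + y₂ + y₃ : ℝ):ℂ) • 1) *ᵥ ((α:ℂ) • ahat))
        = ((α^2 : ℝ) : ℂ) * (star ahat ⬝ᵥ (W - ((y₁ + y₂ + y₃ : ℝ):ℂ) • 1) *ᵥ ahat) := by
      rw [Matrix.mulVec_smul, star_smul, smul_dotProduct, dotProduct_smul]
      simp only [Complex.star_def, Complex.conj_ofReal, smul_eq_mul]
      push_cast
      ring
    have e2 : (star ((α:ℂ) • ahat) ⬝ᵥ ((y₁:ℂ) • ahat)) * 1 = ((α * y₁ * N : ℝ) : ℂ) := by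
      rw [star_smul, smul_dotProduct, dotProduct_smul, haN]
      simp only [Complex.star_def, Complex.conj_ofReal, smul_eq_mul, mul_one]
      push_cast
      ring
    have e3 : star (1:ℂ) * (star ((y₁:ℂ) • ahat) ⬝ᵥ ((α:ℂ) • ahat)) = ((α * y₁ * N : ℝ) : ℂ) := by
      rw [star_smul, smul_dotProduct, dotProduct_smul, haN]
      simp only [Complex.star_def, Complex.conj_ofReal, smul_eq_mul, star_one, one_mul]
      push_cast
      ring
    rw [e1, e2, e3, h0] at h
    have h' := (Complex.le_def.mp h).1
    simp only [Complex.add_re, Complex.re_ofReal_mul, Complex.ofReal_re, Complex.ofReal_zero,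
      star_one, one_mul, mul_zero, Complex.zero_re, add_zero] at h'
    -- h' : 0 ≤ α^2 * K + α*y₁*N + α*y₁*N
    have hαK : α * (K + 1) = -y₁ * N := by
      rw [hα]; field_simp
    nlinarith [h', hαpos, hKnn, mul_pos hαpos hαpos]
  have hccpos : 0 < -y₄ - y₁ * ((N:ℝ) - ε) := lt_of_le_of_ne hccnn (Ne.symm hccne)
  refine ⟨by linarith, fun _ => hG2, hccpos, ?_⟩
  intro hs0
  have h23 : y₂ + y₃ = -y₁ := by linarith
  have hTx : ((N:ℝ) - η₁) * z₀ ≤ (Matrix.trace Z).re - x := by linarith [hd2]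
  have h14 : -y₁ * ((N:ℝ) - η₁) ≤ 1 - y₄ := by
    have hmul : z₀ * (-y₁ * ((N:ℝ) - η₁)) ≤ z₀ * (1 - y₄) := by
      rw [hG2, h23]
      nlinarith [hTx, hy₁lt, hz₀pos]
    exact le_of_mul_le_mul_left hmul hz₀pos
  have h5 : 0 ≤ (η₁ + η₂) * y₃ := by nlinarith [h14, hlin, h23]
  have hy₃0 : y₃ = 0 := by
    rcases lt_or_eq_of_le hy₃ with h | h
    · exact absurd h5 (not_le.mpr (mul_neg_of_pos_of_neg hηsum h))
    · exact h
  have hden : 0 < 2 * (N:ℝ) - ε - η₁ := by linarith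
  rw [gt_iff_lt, div_lt_iff₀ hden]
  nlinarith [hccpos, hlin, hy₃0, h23]
end

section
/- (Theorem 1.) Let R̂ and Z be Hermitian N×N matrices with R̂ − Z positive semidefinite, let w, â ∈ ℂ^N, ε ∈ ℝ, and y₁, y₂, y₃, y₄ ∈ ℝ, and suppose: (i) tr((R̂ − Z) w w^H) = 0; (ii) the (N+1)×(N+1) block matrix [[w w^H − (y₁+y₂+y₃) I, y₁ â],[y₁ â^H, −y₄ − y₁(‖â‖² − ε)]] is positive semidefinite; (iii) −y₄ − y₁(‖â‖² − ε) > 0, and define ā = y₁ â / sqrt(−y₄ − y₁(‖â‖² − ε)); (iv) ā and w are linearly independent over ℂ. Then: (1) (R̂ − Z) w = 0; (2) y₁ + y₂ + y₃ ≤ −(‖ā‖² − ‖w‖² + sqrt((‖ā‖² + ‖w‖²)² − 4|ā^H w|²))/2 < 0. -/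
open Matrix
open scoped ComplexOrder

lemma dot_star_self {N : ℕ} (a : Fin N → ℂ) : star a ⬝ᵥ a = ((nsq a : ℝ) : ℂ) := by
  simp only [dotProduct, nsq, Complex.ofReal_sum, Pi.star_apply]
  refine Finset.sum_congr rfl fun i _ => ?_
  rw [Complex.normSq_eq_conj_mul_self, Complex.star_def]

lemma dot_star_comm {N : ℕ} (a b : Fin N → ℂ) :
    star a ⬝ᵥ b = starRingEnd ℂ (star b ⬝ᵥ a) := by
  simp [dotProduct, map_sum, mul_comm]

lemma nsq_pos {N : ℕ} {a : Fin N → ℂ} (ha : a ≠ 0) : 0 < nsq a := by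
  obtain ⟨i, hi⟩ : ∃ i, a i ≠ 0 := by
    by_contra h
    push_neg at h
    exact ha (funext h)
  refine Finset.sum_pos' (fun j _ => Complex.normSq_nonneg _) ⟨i, Finset.mem_univ i, ?_⟩
  exact Complex.normSq_pos.mpr hi

/-- Theorem 1: with `R̂ − Z ⪰ 0`, `tr((R̂−Z)wwᴴ) = 0`, the block matrix
`[[wwᴴ − (y₁+y₂+y₃)I, y₁â],[y₁âᴴ, −y₄−y₁(‖â‖²−ε)]] ⪰ 0`, `−y₄−y₁(‖â‖²−ε) > 0`,
`ā = y₁â/√(−y₄−y₁(‖â‖²−ε))` and `ā, w` linearly independent, one has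
(1) `(R̂−Z)w = 0`; (2) `y₁+y₂+y₃ ≤ −(‖ā‖²−‖w‖²+√((‖ā‖²+‖w‖²)²−4|āᴴw|²))/2 < 0`. -/
theorem stmt_5 {N : ℕ} (Rhat Z : Matrix (Fin N) (Fin N) ℂ)
    (hR : Rhat.IsHermitian) (hZ : Z.IsHermitian) (hRZ : (Rhat - Z).PosSemidef)
    (w ahat : Fin N → ℂ) (ε y₁ y₂ y₃ y₄ : ℝ)
    (h1 : Matrix.trace ((Rhat - Z) * Matrix.vecMulVec w (star w)) = 0)
    (h2 : (blk (Matrix.vecMulVec w (star w) - ((y₁ + y₂ + y₃ : ℝ) : ℂ) • 1)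
        ((y₁ : ℂ) • ahat) (-y₄ - y₁ * (nsq ahat - ε))).PosSemidef)
    (h3 : 0 < -y₄ - y₁ * (nsq ahat - ε))
    (abar : Fin N → ℂ)
    (habar : abar = ((y₁ / Real.sqrt (-y₄ - y₁ * (nsq ahat - ε)) : ℝ) : ℂ) • ahat)
    (h4 : LinearIndependent ℂ ![abar, w]) :
    (Rhat - Z).mulVec w = 0 ∧
    y₁ + y₂ + y₃ ≤
      -((nsq abar - nsq w +
        Real.sqrt ((nsq abar + nsq w) ^ 2 - 4 * ‖star abar ⬝ᵥ w‖ ^ 2)) / 2) ∧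
    -((nsq abar - nsq w +
        Real.sqrt ((nsq abar + nsq w) ^ 2 - 4 * ‖star abar ⬝ᵥ w‖ ^ 2)) / 2) < 0 := by
  -- Part 1
  have part1 : (Rhat - Z).mulVec w = 0 := by
    rw [← hRZ.dotProduct_mulVec_zero_iff]
    rw [← h1]
    simp only [Matrix.trace, Matrix.diag_apply, Matrix.mul_apply, Matrix.vecMulVec_apply,
      dotProduct, Matrix.mulVec, Pi.star_apply]
    refine Finset.sum_congr rfl fun i _ => ?_
    rw [Finset.mul_sum]
    exact Finset.sum_congr rfl fun j _ => by ring
  -- abbreviations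
  set c : ℝ := -y₄ - y₁ * (nsq ahat - ε) with hcdef
  have hcne : (c : ℂ) ≠ 0 := Complex.ofReal_ne_zero.mpr (ne_of_gt h3)
  have hsc : Real.sqrt c * Real.sqrt c = c := Real.mul_self_sqrt h3.le
  have hscne : Real.sqrt c ≠ 0 := by
    intro h0
    rw [h0, mul_zero] at hsc
    exact (ne_of_gt h3) hsc.symm
  clear_value c
  -- the key quadratic-form inequality
  have key : ∀ x : Fin N → ℂ,
      (y₁ + y₂ + y₃) * nsq x + Complex.normSq (star abar ⬝ᵥ x)
        ≤ Complex.normSq (star w ⬝ᵥ x) := by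
    intro x
    set b : Fin N → ℂ := (y₁ : ℂ) • ahat with hbdef
    set d : ℂ := star ahat ⬝ᵥ x with hddef
    have hb : star b ⬝ᵥ x = (y₁ : ℂ) * d := by
      rw [hbdef, hddef]
      simp [star_smul, smul_dotProduct, Complex.star_def, Complex.conj_ofReal, smul_eq_mul]
    set q : ℂ := (y₁ : ℂ) * d with hqdef
    set p : ℂ := star w ⬝ᵥ x with hpdef
    set t : ℂ := -q / (c : ℂ) with htdef
    have hpos := h2.dotProduct_mulVec_nonneg (Sum.elim x (fun _ : Fin 1 => t))
    -- compute the big quadratic form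
    set M : Matrix (Fin N) (Fin N) ℂ :=
      Matrix.vecMulVec w (star w) - ((y₁ + y₂ + y₃ : ℝ) : ℂ) • 1 with hMdef
    have hsv : star (Sum.elim x (fun _ : Fin 1 => t)) =
        Sum.elim (star x) (fun _ : Fin 1 => starRingEnd ℂ t) := by
      funext k
      cases k <;> rfl
    have hmv : (blk M b c) *ᵥ (Sum.elim x (fun _ : Fin 1 => t)) =
        Sum.elim (M *ᵥ x + t • b) (fun _ : Fin 1 => (star b ⬝ᵥ x) + (c : ℂ) * t) := by
      rw [blk, Matrix.fromBlocks_mulVec]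
      funext k
      cases k with
      | inl i => simp [Matrix.mulVec, dotProduct, mul_comm]
      | inr j => simp [Matrix.mulVec, dotProduct, mul_comm]
    have hvmv : Matrix.vecMulVec w (star w) *ᵥ x = p • w := by
      funext i
      simp only [Matrix.mulVec, Matrix.vecMulVec_apply, dotProduct, Pi.smul_apply, smul_eq_mul,
        hpdef, Pi.star_apply]
      rw [Finset.sum_mul]
      exact Finset.sum_congr rfl fun j _ => by ring
    have hq : q + (c : ℂ) * t = 0 := by
      rw [htdef]
      field_simp
      ring
    have hT : star (Sum.elim x (fun _ : Fin 1 => t)) ⬝ᵥ (blk M b c) *ᵥ (Sum.elim x (fun _ : Fin 1 => t)) =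
        ((Complex.normSq p - (y₁ + y₂ + y₃) * nsq x - Complex.normSq q / c : ℝ) : ℂ) := by
      rw [hsv, hmv, sumElim_dotProduct_sumElim]
      rw [dotProduct_add, Matrix.sub_mulVec, dotProduct_sub, hvmv]
      rw [Matrix.smul_mulVec, Matrix.one_mulVec]
      have e1 : star x ⬝ᵥ (p • w) = p * starRingEnd ℂ p := by
        rw [dotProduct_smul, smul_eq_mul, dot_star_comm, hpdef]
      have e2 : star x ⬝ᵥ (((y₁ + y₂ + y₃ : ℝ) : ℂ) • x) = ((y₁ + y₂ + y₃ : ℝ) : ℂ) * ((nsq x : ℝ) : ℂ) := by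
        rw [dotProduct_smul, smul_eq_mul, dot_star_self]
      have e3 : star x ⬝ᵥ (t • b) = t * starRingEnd ℂ q := by
        rw [dotProduct_smul, smul_eq_mul, dot_star_comm, hb]
      have e4 : (fun (_ : Fin 1) => starRingEnd ℂ t) ⬝ᵥ (fun _ : Fin 1 => (star b ⬝ᵥ x) + (c : ℂ) * t) = 0 := by
        have h0 : star b ⬝ᵥ x + (c : ℂ) * t = 0 := by rw [hb]; exact hq
        simp only [h0, mul_zero]
        simp [dotProduct]
      rw [e1, e2, e3, e4]
      have e5 : t * starRingEnd ℂ q = -((Complex.normSq q : ℝ) : ℂ) / (c : ℂ) := by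
        rw [htdef, div_mul_eq_mul_div, neg_mul, Complex.mul_conj]
      rw [e5, Complex.mul_conj]
      rw [Complex.ofReal_sub, Complex.ofReal_sub, Complex.ofReal_mul, Complex.ofReal_div]
      ring
    rw [hT] at hpos
    have hpos' : 0 ≤ Complex.normSq p - (y₁ + y₂ + y₃) * nsq x - Complex.normSq q / c :=
      Complex.zero_le_real.mp hpos
    have habs : Complex.normSq (star abar ⬝ᵥ x) = Complex.normSq q / c := by
      have e6 : star abar ⬝ᵥ x = ((y₁ / Real.sqrt c : ℝ) : ℂ) * d := by
        rw [habar, hddef]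
        simp [star_smul, smul_dotProduct, Complex.star_def, Complex.conj_ofReal, smul_eq_mul]
      rw [e6, hqdef, Complex.normSq_mul, Complex.normSq_mul, Complex.normSq_ofReal,
        Complex.normSq_ofReal]
      rw [div_mul_div_comm, hsc, div_mul_eq_mul_div]
    linarith
  -- strict Cauchy-Schwarz via linear independence
  have habarne : abar ≠ 0 := by
    have := h4.ne_zero 0
    simpa using this
  have hwne : w ≠ 0 := by
    have := h4.ne_zero 1
    simpa using this
  have hA : 0 < nsq abar := nsq_pos habarne
  have hW : 0 < nsq w := nsq_pos hwne
  set A : ℝ := nsq abar with hAdef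
  set W : ℝ := nsq w with hWdef
  set s : ℂ := star abar ⬝ᵥ w with hsdef
  set S : ℝ := Complex.normSq s with hSdef
  have hCS : S < A * W := by
    set u : Fin N → ℂ := ((A : ℝ) : ℂ) • w - s • abar with hudef
    have hune : u ≠ 0 := by
      intro h0
      have hcomb : (-s) • abar + ((A : ℝ) : ℂ) • w = 0 := by
        rw [hudef] at h0
        rw [neg_smul, ← h0]
        abel
      obtain ⟨-, hA0⟩ := LinearIndependent.pair_iff.mp h4 (-s) ((A : ℝ) : ℂ) hcomb
      rw [Complex.ofReal_eq_zero] at hA0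
      exact (ne_of_gt hA) hA0
    have hupos : 0 < nsq u := nsq_pos hune
    have hnu : ((nsq u : ℝ) : ℂ) = ((A * A * W - A * S : ℝ) : ℂ) := by
      rw [← dot_star_self, hudef]
      have hstar : star (((A : ℝ) : ℂ) • w - s • abar)
          = ((A : ℝ) : ℂ) • star w - starRingEnd ℂ s • star abar := by
        simp [star_smul, star_sub, Complex.star_def, Complex.conj_ofReal]
      simp only [hstar, sub_dotProduct, dotProduct_sub, smul_dotProduct, dotProduct_smul,
        smul_eq_mul]
      have hws : star w ⬝ᵥ abar = starRingEnd ℂ s := by rw [dot_star_comm, ← hsdef]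
      have hwa : star abar ⬝ᵥ w = s := hsdef.symm
      rw [dot_star_self w, dot_star_self abar, hws, hwa, ← hWdef, ← hAdef]
      have hSc0 : starRingEnd ℂ s * s = ((S : ℝ) : ℂ) := by
        rw [hSdef]; rw [Complex.normSq_eq_conj_mul_self]
      push_cast
      linear_combination (-(A : ℂ)) * hSc0
    have hnu' : nsq u = A * A * W - A * S := by exact_mod_cast hnu
    nlinarith
  -- the square root
  rw [Complex.sq_norm, ← hSdef]
  have hD0 : 0 ≤ (A + W) ^ 2 - 4 * S := by nlinarith [sq_nonneg (A - W)]
  set r : ℝ := Real.sqrt ((A + W) ^ 2 - 4 * S) with hrdef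
  have hr2 : r ^ 2 = (A + W) ^ 2 - 4 * S := Real.sq_sqrt hD0
  have hrnn : 0 ≤ r := Real.sqrt_nonneg _
  have hrAW : A - W < r ∧ W - A < r := by
    constructor <;> nlinarith [sq_nonneg (A - W)]
  set α : ℝ := (W + A + r) / 2 with hαdef
  have hαpos : 0 < α := by rw [hαdef]; linarith
  have hαW : 0 < α - W := by rw [hαdef]; linarith [hrAW.1]
  -- the test vector
  set v : Fin N → ℂ := ((α : ℝ) : ℂ) • abar + (-(starRingEnd ℂ s)) • w with hvdef
  have hSc : starRingEnd ℂ s * s = ((S : ℝ) : ℂ) := by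
    rw [hSdef]; rw [Complex.normSq_eq_conj_mul_self]
  have hdw : star w ⬝ᵥ v = starRingEnd ℂ s * ((α - W : ℝ) : ℂ) := by
    rw [hvdef, dotProduct_add, dotProduct_smul, dotProduct_smul, dot_star_self w,
      dot_star_comm w abar, ← hsdef]
    simp only [smul_eq_mul, ← hWdef]
    push_cast
    ring
  have hda : star abar ⬝ᵥ v = ((α * A - S : ℝ) : ℂ) := by
    rw [hvdef, dotProduct_add, dotProduct_smul, dotProduct_smul, dot_star_self abar, ← hsdef]
    simp only [smul_eq_mul, ← hAdef]
    push_cast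
    linear_combination -hSc
  have hnvC : ((nsq v : ℝ) : ℂ) = ((α ^ 2 * A - 2 * α * S + S * W : ℝ) : ℂ) := by
    rw [← dot_star_self, hvdef]
    have hstar : star (((α : ℝ) : ℂ) • abar + (-(starRingEnd ℂ s)) • w)
        = ((α : ℝ) : ℂ) • star abar + (-s) • star w := by
      simp [star_smul, star_add, Complex.star_def, Complex.conj_ofReal]
    rw [hstar, add_dotProduct, smul_dotProduct, smul_dotProduct, ← hvdef]
    rw [hda, hdw]
    simp only [smul_eq_mul]
    push_cast
    linear_combination (-(((α : ℝ) : ℂ)) + ((W : ℝ) : ℂ)) * hSc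
  have hnv : nsq v = α ^ 2 * A - 2 * α * S + S * W := by exact_mod_cast hnvC
  have keyv := key v
  rw [hnv, hda, hdw] at keyv
  rw [Complex.normSq_ofReal, Complex.normSq_mul, Complex.normSq_conj, ← hSdef,
    Complex.normSq_ofReal] at keyv
  -- algebraic identities
  have i1 : α ^ 2 * A - 2 * α * S + S * W = α * (α - W) * r := by
    rw [hαdef]
    linear_combination ((-A - r) / 4) * hr2
  have i2 : α * A - S = α * (α - W) := by
    rw [hαdef]
    linear_combination (-(1 : ℝ) / 4) * hr2
  have i5 : S * ((α - W) * (α - W)) - (α * (α - W)) * (α * (α - W))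
      = (W - α) * (α * (α - W) * r) := by
    rw [hαdef]
    linear_combination ((((W + A + r) / 2 - W) ^ 2) / 4) * hr2
  have hK : 0 < α * (α - W) * r := by
    have : 0 < r := by linarith [hrAW.1, hrAW.2]
    exact mul_pos (mul_pos hαpos hαW) this
  have i2' : (α * A - S) * (α * A - S) = (α * (α - W)) * (α * (α - W)) := by rw [i2]
  rw [i1, i2'] at keyv
  have hfin : (y₁ + y₂ + y₃) * (α * (α - W) * r) ≤ (W - α) * (α * (α - W) * r) := by
    linarith [keyv, i5]
  have hle : y₁ + y₂ + y₃ ≤ W - α := le_of_mul_le_mul_right hfin hK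
  have hgoal : -((A - W + r) / 2) = W - α := by rw [hαdef]; ring
  rw [hgoal]
  exact ⟨part1, hle, by linarith [hαW]⟩
end

section
/- (Theorem 2.) Let N ≥ 1, â ∈ ℂ^N with ‖â‖² = N, reals ε, η₁, η₂ with 0 < ε < N, η₁, η₂ ≥ 0, and R̂ a Hermitian positive semidefinite N×N matrix. Suppose (W, y₁, y₂, y₃, y₄) is feasible for the tightened LMI relaxation, that y := y₁ + y₂ + y₃ < 0 and −y₄ − y₁(‖â‖² − ε) > 0, define ā = y₁ â / sqrt(−y₄ − y₁(‖â‖² − ε)), and assume y² + y(‖ā‖² − tr W) + ā^H W ā − ‖ā‖² tr W ≥ 0. Then there exists w ∈ ℂ^N such that (w w^H, y₁, y₂, y₃, y₄) is feasible for the tightened LMI relaxation and tr(R̂ (w w^H)) = tr(R̂ W). In particular, if in addition W minimizes tr(R̂ ·) over all feasible tuples, then the tightened LMI relaxation has a rank-one optimal solution. -/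
open Matrix
open scoped ComplexOrder

/-- Feasibility for the tightened LMI relaxation: `W ⪰ 0`, `y₁ ≤ 0`, `y₂ ≥ 0`, `y₃ ≤ 0`,
`(N−η₁)y₂ + (N+η₂)y₃ + y₄ = 1`, `y₁+y₂+y₃ ≤ 0`, and the block matrix
`[[W − (y₁+y₂+y₃)I, y₁â],[y₁âᴴ, −y₄ − y₁(‖â‖² − ε)]]` is positive semidefinite. -/
noncomputable def Feas {N : ℕ} (ahat : Fin N → ℂ) (ε η₁ η₂ : ℝ)
    (W : Matrix (Fin N) (Fin N) ℂ) (y₁ y₂ y₃ y₄ : ℝ) : Prop :=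
  W.PosSemidef ∧ y₁ ≤ 0 ∧ 0 ≤ y₂ ∧ y₃ ≤ 0 ∧
  ((N : ℝ) - η₁) * y₂ + ((N : ℝ) + η₂) * y₃ + y₄ = 1 ∧
  y₁ + y₂ + y₃ ≤ 0 ∧
  (blk (W - ((y₁ + y₂ + y₃ : ℝ) : ℂ) • 1) ((y₁ : ℂ) • ahat)
    (-y₄ - y₁ * (nsq ahat - ε))).PosSemidef

open scoped InnerProductSpace

namespace Stmt7Aux
variable {N : ℕ}

noncomputable def outer (v : Fin N → ℂ) : Matrix (Fin N) (Fin N) ℂ := vecMulVec v (star v)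

noncomputable def qf (A : Matrix (Fin N) (Fin N) ℂ) (v : Fin N → ℂ) : ℝ :=
  (star v ⬝ᵥ A.mulVec v).re

lemma tr_mul_outer (A : Matrix (Fin N) (Fin N) ℂ) (v : Fin N → ℂ) :
    Matrix.trace (A * outer v) = star v ⬝ᵥ A.mulVec v := by
  simp only [Matrix.trace, Matrix.diag, Matrix.mul_apply, outer, vecMulVec_apply,
    dotProduct, Matrix.mulVec, Pi.star_apply]
  refine Finset.sum_congr rfl fun i _ => ?_
  rw [Finset.mul_sum]
  refine Finset.sum_congr rfl fun j _ => ?_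
  ring

lemma outer_mulVec (v x : Fin N → ℂ) :
    (outer v).mulVec x = (star v ⬝ᵥ x) • v := by
  ext i
  simp only [outer, Matrix.mulVec, vecMulVec_apply, dotProduct, Pi.smul_apply, Pi.star_apply,
    smul_eq_mul]
  rw [Finset.sum_mul]
  refine Finset.sum_congr rfl fun j _ => ?_
  ring

lemma outer_form (v x : Fin N → ℂ) :
    star x ⬝ᵥ (outer v).mulVec x = star (star v ⬝ᵥ x) * (star v ⬝ᵥ x) := by
  rw [outer_mulVec, dotProduct_smul, smul_eq_mul, star_dotProduct v x, star_star]
  ring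

lemma outer_form_re (v x : Fin N → ℂ) :
    (star x ⬝ᵥ (outer v).mulVec x).re = Complex.normSq (star v ⬝ᵥ x) := by
  rw [outer_form, Complex.star_def, ← Complex.normSq_eq_conj_mul_self]
  simp

lemma outer_isHermitian (v : Fin N → ℂ) : (outer v).IsHermitian := by
  ext i j
  simp [outer, Matrix.conjTranspose_apply, vecMulVec_apply, mul_comm]

lemma re_form_of_psd {M : Matrix (Fin N) (Fin N) ℂ} (h : M.PosSemidef) (x : Fin N → ℂ) :
    0 ≤ (star x ⬝ᵥ M.mulVec x).re := by
  have := h.dotProduct_mulVec_nonneg x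
  rw [Complex.le_def] at this
  simpa using this.1

lemma psd_of_re {M : Matrix (Fin N) (Fin N) ℂ} (hH : M.IsHermitian)
    (h : ∀ x, 0 ≤ (star x ⬝ᵥ M.mulVec x).re) : M.PosSemidef := by
  refine Matrix.PosSemidef.of_dotProduct_mulVec_nonneg hH fun x => ?_
  rw [Complex.le_def]
  refine ⟨by simpa using h x, ?_⟩
  have hst : star (star x ⬝ᵥ M.mulVec x) = star x ⬝ᵥ M.mulVec x := by
    rw [← star_dotProduct, star_mulVec, ← dotProduct_mulVec, hH.eq]
  have := congrArg Complex.im hst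
  simp only [Complex.star_def, Complex.conj_im] at this
  simp only [Complex.zero_im]
  linarith


lemma nsq_eq (v : Fin N → ℂ) : nsq v = (star v ⬝ᵥ v).re := by
  simp only [nsq, dotProduct, Pi.star_apply, Complex.star_def]
  rw [Complex.re_sum]
  refine Finset.sum_congr rfl fun i _ => ?_
  rw [← Complex.normSq_eq_conj_mul_self]
  simp

lemma nsq_nonneg (v : Fin N → ℂ) : 0 ≤ nsq v :=
  Finset.sum_nonneg fun i _ => Complex.normSq_nonneg _

lemma nsq_eq_zero_iff {v : Fin N → ℂ} : nsq v = 0 ↔ v = 0 := by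
  constructor
  · intro h
    funext i
    have h2 := (Finset.sum_eq_zero_iff_of_nonneg (fun i _ => Complex.normSq_nonneg (v i))).mp h
      i (Finset.mem_univ i)
    simpa using Complex.normSq_eq_zero.mp h2
  · intro h; simp [h, nsq]

lemma nsq_pos_of_ne {v : Fin N → ℂ} (h : v ≠ 0) : 0 < nsq v :=
  lt_of_le_of_ne (nsq_nonneg v) fun h' => h (nsq_eq_zero_iff.mp h'.symm)

lemma nsq_smul (κ : ℝ) (v : Fin N → ℂ) : nsq ((κ : ℂ) • v) = κ ^ 2 * nsq v := by
  simp only [nsq, Pi.smul_apply, smul_eq_mul, Complex.normSq_mul, Complex.normSq_ofReal,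
    Finset.mul_sum]
  exact Finset.sum_congr rfl fun i _ => by ring

lemma dot_smul_left (κ : ℝ) (v x : Fin N → ℂ) :
    star ((κ : ℂ) • v) ⬝ᵥ x = (κ : ℂ) * (star v ⬝ᵥ x) := by
  rw [star_smul, smul_dotProduct]
  simp [Complex.star_def, Complex.conj_ofReal]

lemma qf_smul (A : Matrix (Fin N) (Fin N) ℂ) (κ : ℝ) (v : Fin N → ℂ) :
    qf A ((κ : ℂ) • v) = κ ^ 2 * qf A v := by
  simp only [qf]
  rw [mulVec_smul, dotProduct_smul, dot_smul_left]
  simp only [smul_eq_mul, ← mul_assoc, ← Complex.ofReal_mul]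
  rw [Complex.re_ofReal_mul]
  ring


lemma outer_rot {c s : ℝ} (h : c ^ 2 + s ^ 2 = 1) (v u : Fin N → ℂ) :
    outer ((c : ℂ) • v + (s : ℂ) • u) + outer ((-(s : ℂ)) • v + (c : ℂ) • u) =
      outer v + outer u := by
  have hc : ((c : ℂ)) ^ 2 + ((s : ℂ)) ^ 2 = 1 := by
    have := congrArg (fun r : ℝ => (r : ℂ)) h
    push_cast at this ⊢
    exact this
  ext i j
  simp only [outer, Matrix.add_apply, vecMulVec_apply, Pi.add_apply, Pi.smul_apply,
    Pi.star_apply, smul_eq_mul, star_add, star_mul', Complex.star_def, map_add, map_neg,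
    _root_.map_mul, Complex.conj_ofReal]
  linear_combination (v i * (starRingEnd ℂ) (v j) + u i * (starRingEnd ℂ) (u j)) * hc

lemma qf_expand (A : Matrix (Fin N) (Fin N) ℂ) (c s : ℝ) (v u : Fin N → ℂ) :
    qf A ((c : ℂ) • v + (s : ℂ) • u) =
      c ^ 2 * qf A v + s ^ 2 * qf A u +
        c * s * ((star v ⬝ᵥ A.mulVec u) + (star u ⬝ᵥ A.mulVec v)).re := by
  simp only [qf]
  rw [mulVec_add, mulVec_smul, mulVec_smul, star_add, star_smul, star_smul,
    add_dotProduct, smul_dotProduct, smul_dotProduct, dotProduct_add, dotProduct_add,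
    dotProduct_smul, dotProduct_smul, dotProduct_smul, dotProduct_smul]
  simp only [smul_eq_mul, Complex.star_def, Complex.conj_ofReal, Complex.add_re,
    ← mul_assoc, ← Complex.ofReal_mul, Complex.re_ofReal_mul]
  ring

lemma sum_qf (A : Matrix (Fin N) (Fin N) ℂ) {r : ℕ} (q : Fin r → (Fin N → ℂ)) :
    ∑ i, qf A (q i) = (Matrix.trace (A * ∑ i, outer (q i))).re := by
  rw [Matrix.mul_sum, Matrix.trace_sum, Complex.re_sum]
  refine Finset.sum_congr rfl fun i _ => ?_
  rw [qf, tr_mul_outer]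


lemma exists_rot (A : Matrix (Fin N) (Fin N) ℂ) (v u : Fin N → ℂ)
    (hsign : qf A v * qf A u < 0) :
    ∃ c s : ℝ, c ^ 2 + s ^ 2 = 1 ∧ qf A ((c : ℂ) • v + (s : ℂ) • u) = 0 := by
  set a := qf A v with ha
  set b := qf A u with hb
  set g := ((star v ⬝ᵥ A.mulVec u) + (star u ⬝ᵥ A.mulVec v)).re with hg
  set F : ℝ → ℝ := fun θ => Real.cos θ ^ 2 * a + Real.sin θ ^ 2 * b +
    Real.cos θ * Real.sin θ * g with hF
  have hFc : Continuous F := by fun_prop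
  have hF0 : F 0 = a := by simp [hF]
  have hFpi : F (Real.pi / 2) = b := by simp [hF]
  have hpi : (0 : ℝ) ≤ Real.pi / 2 := by positivity
  have key : ∃ θ ∈ Set.Icc 0 (Real.pi / 2), F θ = 0 := by
    rcases lt_or_ge a 0 with haneg | hapos
    · have hbpos : 0 < b := by nlinarith
      have := intermediate_value_Icc hpi hFc.continuousOn
      have h0 : (0 : ℝ) ∈ Set.Icc (F 0) (F (Real.pi / 2)) := by
        rw [hF0, hFpi]; exact ⟨le_of_lt haneg, le_of_lt hbpos⟩
      obtain ⟨θ, hθ, hθ0⟩ := this h0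
      exact ⟨θ, hθ, hθ0⟩
    · have hapos' : 0 < a := by
        rcases lt_or_eq_of_le hapos with h | h
        · exact h
        · rw [← h] at hsign; simp at hsign
      have hbneg : b < 0 := by nlinarith
      have := intermediate_value_Icc' hpi hFc.continuousOn
      have h0 : (0 : ℝ) ∈ Set.Icc (F (Real.pi / 2)) (F 0) := by
        rw [hF0, hFpi]; exact ⟨le_of_lt hbneg, le_of_lt hapos'⟩
      obtain ⟨θ, hθ, hθ0⟩ := this h0
      exact ⟨θ, hθ, hθ0⟩
  obtain ⟨θ, _, hθ0⟩ := key
  refine ⟨Real.cos θ, Real.sin θ, by rw [Real.cos_sq_add_sin_sq], ?_⟩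
  rw [qf_expand]
  simpa [hF, ha, hb, hg] using hθ0

lemma decomp (A : Matrix (Fin N) (Fin N) ℂ) :
    ∀ (r : ℕ) (p : Fin r → (Fin N → ℂ)), (∑ i, qf A (p i)) = 0 →
    ∃ v : Fin r → (Fin N → ℂ),
      (∑ i, outer (v i)) = (∑ i, outer (p i)) ∧ ∀ i, qf A (v i) = 0 := by
  intro r
  induction r with
  | zero => exact fun p _ => ⟨p, rfl, fun i => i.elim0⟩
  | succ r ih =>
    intro p hsum
    have main : ∃ p' : Fin (r + 1) → (Fin N → ℂ),
        (∑ i, outer (p' i)) = (∑ i, outer (p i)) ∧ qf A (p' 0) = 0 := by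
      by_cases h0 : qf A (p 0) = 0
      · exact ⟨p, rfl, h0⟩
      · have hsplit := Finset.add_sum_erase Finset.univ (fun i => qf A (p i)) (Finset.mem_univ 0)
        have hsum' : ∑ i ∈ Finset.univ.erase 0, qf A (p i) = - qf A (p 0) := by
          rw [hsum] at hsplit; linarith
        have hj : ∃ j ∈ Finset.univ.erase (0 : Fin (r + 1)), qf A (p 0) * qf A (p j) < 0 := by
          rcases lt_or_gt_of_ne h0 with hneg | hpos
          · by_contra hc
            push_neg at hc
            have hnp : ∀ j ∈ Finset.univ.erase (0 : Fin (r + 1)), qf A (p j) ≤ 0 := by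
              intro j hjm
              nlinarith [hc j hjm]
            have := Finset.sum_nonpos hnp
            rw [hsum'] at this; linarith
          · by_contra hc
            push_neg at hc
            have hnp : ∀ j ∈ Finset.univ.erase (0 : Fin (r + 1)), 0 ≤ qf A (p j) := by
              intro j hjm
              nlinarith [hc j hjm]
            have := Finset.sum_nonneg hnp
            rw [hsum'] at this; linarith
        obtain ⟨j, hjmem, hjsign⟩ := hj
        have hj0 : j ≠ 0 := (Finset.mem_erase.mp hjmem).1
        obtain ⟨c, s, hcs, hzero⟩ := exists_rot A (p 0) (p j) hjsign
        set v' := (c : ℂ) • p 0 + (s : ℂ) • p j with hv'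
        set u' := (-(s : ℂ)) • p 0 + (c : ℂ) • p j with hu'
        have hrot := outer_rot hcs (p 0) (p j)
        refine ⟨fun i => if i = 0 then v' else if i = j then u' else p i, ?_, by simpa using hzero⟩
        have split : ∀ g : Fin (r + 1) → Matrix (Fin N) (Fin N) ℂ,
            ∑ i, g i = g 0 + g j + ∑ i ∈ (Finset.univ.erase 0).erase j, g i := by
          intro g
          rw [← Finset.add_sum_erase _ g (Finset.mem_univ 0), ← Finset.add_sum_erase _ g hjmem,
            add_assoc]
        rw [split (fun i => outer (if i = 0 then v' else if i = j then u' else p i)),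
          split (fun i => outer (p i))]
        have hterm0 : (if (0 : Fin (r+1)) = 0 then v' else if (0 : Fin (r+1)) = j then u'
            else p 0) = v' := by simp
        have htermj : (if j = 0 then v' else if j = j then u' else p j) = u' := by
          simp [hj0]
        rw [hterm0, htermj]
        have hrest : ∑ i ∈ (Finset.univ.erase 0).erase j,
            outer (if i = 0 then v' else if i = j then u' else p i) =
            ∑ i ∈ (Finset.univ.erase 0).erase j, outer (p i) := by
          refine Finset.sum_congr rfl fun i hi => ?_
          have hi1 := (Finset.mem_erase.mp hi).1
          have hi2 := (Finset.mem_erase.mp (Finset.mem_erase.mp hi).2).1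
          simp [hi1, hi2]
        rw [hrest, hrot]
    obtain ⟨p', hp'sum, hp'0⟩ := main
    have hqsum : ∑ i, qf A (p' i) = 0 := by
      rw [sum_qf, hp'sum, ← sum_qf, hsum]
    have htail : ∑ i : Fin r, qf A (p' i.succ) = 0 := by
      rw [Fin.sum_univ_succ, hp'0, zero_add] at hqsum
      exact hqsum
    obtain ⟨vt, hvt1, hvt2⟩ := ih (fun i => p' i.succ) htail
    refine ⟨Fin.cons (p' 0) vt, ?_, ?_⟩
    · rw [Fin.sum_univ_succ, ← hp'sum, Fin.sum_univ_succ (f := fun i => outer (p' i))]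
      simp only [Fin.cons_zero, Fin.cons_succ]
      rw [hvt1]
    · intro i
      refine Fin.cases ?_ ?_ i
      · simpa using hp'0
      · intro k
        simpa using hvt2 k

lemma core_scalar {m s u X pc R : ℝ} (hm : 0 < m) (hs : 0 < s)
    (hu : 0 ≤ u) (hX : 0 ≤ X) (hpc : 0 ≤ pc) (hR : 0 ≤ R)
    (hstar : R ^ 2 * (m + s) ≤ m * (m + s) - m * pc ^ 2 * s) :
    s * (pc * u + R * X) ^ 2 ≤ m * u ^ 2 + m * s * X ^ 2 + s * u ^ 2 := by
  have hD : 0 ≤ m * (m + s) - m * s * pc ^ 2 - R ^ 2 * (m + s) := by nlinarith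
  nlinarith [sq_nonneg (pc * m * s * X - R * (m + s) * u),
    mul_nonneg (mul_nonneg (mul_nonneg hm.le hs.le) (sq_nonneg X)) hD,
    mul_nonneg (mul_nonneg (by linarith : (0:ℝ) ≤ m + s) (sq_nonneg u)) hD,
    mul_pos hm (by linarith : (0:ℝ) < m + s)]


variable {E : Type*} [NormedAddCommGroup E] [InnerProductSpace ℂ E]

lemma core (w a x : E) (m : ℝ) (hm : 0 < m) (hw : 0 < ‖w‖)
    (hP : (m + ‖w‖ ^ 2) * (‖a‖ ^ 2 - m) ≤ ‖(⟪w, a⟫_ℂ)‖ ^ 2) :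
    ‖(⟪a, x⟫_ℂ)‖ ^ 2 ≤ m * ‖x‖ ^ 2 + ‖(⟪w, x⟫_ℂ)‖ ^ 2 := by
  set s : ℝ := ‖w‖ ^ 2 with hsdef
  have hs : 0 < s := by positivity
  have hsne : (s : ℂ) ≠ 0 := by
    simp only [ne_eq, Complex.ofReal_eq_zero]; exact ne_of_gt hs
  have hww : ⟪w, w⟫_ℂ = (s : ℂ) := by
    rw [inner_self_eq_norm_sq_to_K, hsdef]; norm_cast
  set cc : ℂ := ⟪w, a⟫_ℂ / (s : ℂ) with hcc
  set r : E := a - cc • w with hr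
  have hwr : ⟪w, r⟫_ℂ = 0 := by
    rw [hr, inner_sub_right, inner_smul_right, hww, hcc]
    field_simp
    ring
  have hrw : ⟪r, w⟫_ℂ = 0 := by
    rw [← inner_conj_symm, hwr, map_zero]
  have hadecomp : a = cc • w + r := by rw [hr]; abel
  have hwa : ⟪w, a⟫_ℂ = cc * s := by
    rw [hcc]; field_simp
  have hna : ‖a‖ ^ 2 = ‖cc‖ ^ 2 * s + ‖r‖ ^ 2 := by
    rw [hadecomp, @norm_add_sq ℂ, inner_smul_left, hwr, mul_zero]
    simp [norm_smul, hsdef]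
    ring
  set aa : ℂ := ⟪w, x⟫_ℂ / (s : ℂ) with haa
  set x' : E := x - aa • w with hx'
  have hwx' : ⟪w, x'⟫_ℂ = 0 := by
    rw [hx', inner_sub_right, inner_smul_right, hww, haa]
    field_simp
    ring
  have hwx : ⟪w, x⟫_ℂ = aa * s := by rw [haa]; field_simp
  have hxdecomp : x = aa • w + x' := by rw [hx']; abel
  have hnx : ‖x‖ ^ 2 = ‖aa‖ ^ 2 * s + ‖x'‖ ^ 2 := by
    rw [hxdecomp, @norm_add_sq ℂ, inner_smul_left, hwx', mul_zero]
    simp [norm_smul, hsdef]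
    ring
  have hrx' : ⟪r, x⟫_ℂ = ⟪r, x'⟫_ℂ := by
    rw [hxdecomp, inner_add_right, inner_smul_right, hrw, mul_zero, zero_add]
  have hax : ⟪a, x⟫_ℂ = (starRingEnd ℂ) cc * (aa * (s : ℂ)) + ⟪r, x'⟫_ℂ := by
    rw [hadecomp, inner_add_left, inner_smul_left, hwx, hrx']
  set u : ℝ := ‖aa‖ * s with hu
  set pc : ℝ := ‖cc‖ with hpc
  set R : ℝ := ‖r‖ with hR
  set X : ℝ := ‖x'‖ with hX
  have hnorms : ‖(s : ℂ)‖ = s := by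
    rw [Complex.norm_real, Real.norm_of_nonneg hs.le]
  have htri : ‖(⟪a, x⟫_ℂ)‖ ≤ pc * u + R * X := by
    calc ‖(⟪a, x⟫_ℂ)‖ ≤ ‖(starRingEnd ℂ) cc * (aa * (s : ℂ))‖ + ‖(⟪r, x'⟫_ℂ)‖ := by
          rw [hax]; exact norm_add_le _ _
    _ ≤ ‖cc‖ * (‖aa‖ * s) + ‖r‖ * ‖x'‖ := by
          rw [norm_mul, norm_mul, RCLike.norm_conj, hnorms]
          exact add_le_add le_rfl (norm_inner_le_norm r x')
    _ = pc * u + R * X := by rw [hu, hpc, hR, hX]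
  have hwxn : ‖(⟪w, x⟫_ℂ)‖ = u := by
    rw [hwx, norm_mul, hnorms]
  have hwan : ‖(⟪w, a⟫_ℂ)‖ = pc * s := by
    rw [hwa, norm_mul, hnorms]
  have hstar : R ^ 2 * (m + s) ≤ m * (m + s) - m * pc ^ 2 * s := by
    rw [hwan] at hP
    nlinarith [hP, hna]
  have h2 := core_scalar hm hs (by positivity : (0:ℝ) ≤ u) (norm_nonneg x')
    (norm_nonneg cc) (norm_nonneg r) hstar
  have h1 : ‖(⟪a, x⟫_ℂ)‖ ^ 2 ≤ (pc * u + R * X) ^ 2 :=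
    pow_le_pow_left₀ (norm_nonneg _) htri 2
  have hsx : s * ‖x‖ ^ 2 = u ^ 2 + s * X ^ 2 := by
    rw [hnx, hu]; ring
  rw [← mul_le_mul_iff_right₀ hs]
  calc s * ‖(⟪a, x⟫_ℂ)‖ ^ 2 ≤ s * (pc * u + R * X) ^ 2 := by
        exact mul_le_mul_of_nonneg_left h1 hs.le
  _ ≤ m * u ^ 2 + m * s * X ^ 2 + s * u ^ 2 := h2
  _ = s * (m * ‖x‖ ^ 2 + ‖(⟪w, x⟫_ℂ)‖ ^ 2) := by
        rw [hwxn]; linear_combination m * hsx.symm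


-- bridge to EuclideanSpace
noncomputable def toE (v : Fin N → ℂ) : EuclideanSpace ℂ (Fin N) :=
  (WithLp.equiv 2 (Fin N → ℂ)).symm v

lemma inner_toE (v x : Fin N → ℂ) : (⟪toE v, toE x⟫_ℂ) = star v ⬝ᵥ x := by
  rw [PiLp.inner_apply]
  simp [toE, dotProduct, RCLike.inner_apply, mul_comm]

lemma norm_toE_sq (v : Fin N → ℂ) : ‖toE v‖ ^ 2 = nsq v := by
  rw [EuclideanSpace.norm_eq, Real.sq_sqrt (by positivity)]
  simp [toE, nsq, Complex.sq_norm]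

lemma normSq_eq_norm_sq (z : ℂ) : Complex.normSq z = ‖z‖ ^ 2 := by
  rw [Complex.sq_norm]

lemma blk_psd_iff (A : Matrix (Fin N) (Fin N) ℂ) (b : Fin N → ℂ) {c : ℝ} (hc : 0 < c) :
    (blk A b c).PosSemidef ↔ (A - ((c⁻¹ : ℝ) : ℂ) • outer b).PosSemidef := by
  classical
  set Bm : Matrix (Fin N) (Fin 1) ℂ := Matrix.of fun i _ => b i with hBm
  set Dm : Matrix (Fin 1) (Fin 1) ℂ := Matrix.of fun _ _ => (c : ℂ) with hDm
  have hblk : blk A b c = fromBlocks A Bm Bmᴴ Dm := by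
    unfold blk
    ext (i | i) (j | j) <;>
      simp [hBm, hDm, Matrix.conjTranspose_apply, Matrix.fromBlocks]
  have hDH : Dm.IsHermitian := by
    ext i j
    simp [hDm, Matrix.conjTranspose_apply, Complex.star_def, Complex.conj_ofReal]
  have hDpd : Dm.PosDef := by
    refine Matrix.PosDef.of_dotProduct_mulVec_pos hDH fun x hx => ?_
    have hx0 : x 0 ≠ 0 := by
      intro h
      apply hx
      funext i
      have : i = 0 := Subsingleton.elim i 0
      rw [this, h]; rfl
    have hcalc : star x ⬝ᵥ Dm.mulVec x = ((c * Complex.normSq (x 0) : ℝ) : ℂ) := by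
      simp only [Matrix.mulVec, dotProduct, Fin.sum_univ_one, hDm, Matrix.of_apply,
        Pi.star_apply, Complex.star_def]
      rw [show (starRingEnd ℂ) (x 0) * ((c : ℂ) * x 0) =
        (c : ℂ) * ((starRingEnd ℂ) (x 0) * x 0) by ring, ← Complex.normSq_eq_conj_mul_self]
      push_cast
      ring
    rw [hcalc, Complex.zero_lt_real]
    exact mul_pos hc (Complex.normSq_pos.mpr hx0)
  haveI : Invertible Dm := Dm.invertibleOfIsUnitDet
    (by rw [Matrix.det_fin_one]
        exact isUnit_iff_ne_zero.mpr (by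
          simpa [hDm] using Complex.ofReal_ne_zero.mpr hc.ne'))
  have hDinv : Dm⁻¹ = Matrix.of fun _ _ => ((c⁻¹ : ℝ) : ℂ) := by
    apply Matrix.inv_eq_right_inv
    ext i j
    have : i = j := Subsingleton.elim i j
    subst this
    simp only [Matrix.mul_apply, Fin.sum_univ_one, hDm, Matrix.of_apply, Matrix.one_apply_eq]
    rw [← Complex.ofReal_mul, mul_inv_cancel₀ hc.ne', Complex.ofReal_one]
  have hBDB : Bm * Dm⁻¹ * Bmᴴ = ((c⁻¹ : ℝ) : ℂ) • outer b := by
    rw [hDinv]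
    ext i j
    simp [Matrix.mul_apply, Fin.sum_univ_one, hBm, Matrix.conjTranspose_apply,
      outer, vecMulVec_apply, Matrix.smul_apply, smul_eq_mul]
    ring
  rw [hblk, Matrix.PosDef.fromBlocks₂₂ A Bm hDpd, hBDB]

lemma smul_one_isHermitian (y : ℝ) :
    (((y : ℂ)) • (1 : Matrix (Fin N) (Fin N) ℂ)).IsHermitian := by
  ext i j
  by_cases h : i = j
  · subst h
    simp [Matrix.conjTranspose_apply, Matrix.one_apply, Complex.conj_ofReal]
  · simp [Matrix.conjTranspose_apply, Matrix.one_apply, h, Ne.symm h]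

lemma smul_one_form_re (y : ℝ) (x : Fin N → ℂ) :
    (star x ⬝ᵥ (((y : ℂ)) • (1 : Matrix (Fin N) (Fin N) ℂ)).mulVec x).re = y * nsq x := by
  rw [smul_mulVec, one_mulVec, dotProduct_smul, smul_eq_mul, Complex.re_ofReal_mul,
    ← nsq_eq]

lemma trace_outer_re (v : Fin N → ℂ) : (Matrix.trace (outer v)).re = nsq v := by
  simp only [Matrix.trace, Matrix.diag_apply, outer, vecMulVec_apply, Pi.star_apply,
    Complex.re_sum, nsq]
  refine Finset.sum_congr rfl fun i _ => ?_
  rw [Complex.star_def, Complex.mul_conj, Complex.ofReal_re]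



lemma outer_smul_real (r : ℝ) (a : Fin N → ℂ) :
    outer ((r : ℂ) • a) = ((r * r : ℝ) : ℂ) • outer a := by
  ext i j
  simp only [outer, vecMulVec_apply, Pi.smul_apply, Matrix.smul_apply, smul_eq_mul,
    Pi.star_apply, Complex.star_def, _root_.map_mul, Complex.conj_ofReal]
  push_cast
  ring

lemma core_dot (w a x : Fin N → ℂ) (m : ℝ) (hm : 0 < m) (hw : 0 < nsq w)
    (hP : (m + nsq w) * (nsq a - m) ≤ Complex.normSq (star w ⬝ᵥ a)) :
    Complex.normSq (star a ⬝ᵥ x) ≤ m * nsq x + Complex.normSq (star w ⬝ᵥ x) := by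
  have hwn : 0 < ‖toE w‖ := by
    have h := norm_toE_sq w
    nlinarith [norm_nonneg (toE w)]
  have hP' : (m + ‖toE w‖ ^ 2) * (‖toE a‖ ^ 2 - m) ≤ ‖(⟪toE w, toE a⟫_ℂ)‖ ^ 2 := by
    rw [norm_toE_sq, norm_toE_sq, inner_toE, ← normSq_eq_norm_sq]
    exact hP
  have h := core (toE w) (toE a) (toE x) m hm hwn hP'
  rw [inner_toE, inner_toE, norm_toE_sq, ← normSq_eq_norm_sq, ← normSq_eq_norm_sq] at h
  exact h

end Stmt7Aux

open Stmt7Aux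

set_option maxHeartbeats 1000000 in
/-- Theorem 2: if `(W, y₁, y₂, y₃, y₄)` is feasible for the tightened LMI relaxation,
`y = y₁+y₂+y₃ < 0`, `−y₄ − y₁(‖â‖² − ε) > 0`, `ā = y₁â/√(−y₄ − y₁(‖â‖² − ε))` and
`y² + y(‖ā‖² − tr W) + āᴴWā − ‖ā‖² tr W ≥ 0`, then there is `w` such that
`(wwᴴ, y₁, y₂, y₃, y₄)` is feasible with the same objective value `tr(R̂ W)`; in particular
if `W` is optimal then the relaxation has a rank-one optimal solution. -/
theorem stmt_7 {N : ℕ} (hN : 1 ≤ N) (ahat : Fin N → ℂ) (ha : nsq ahat = N)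
    (ε η₁ η₂ : ℝ) (hε0 : 0 < ε) (hεN : ε < N) (hη₁ : 0 ≤ η₁) (hη₂ : 0 ≤ η₂)
    (Rhat : Matrix (Fin N) (Fin N) ℂ) (hR : Rhat.PosSemidef)
    (W : Matrix (Fin N) (Fin N) ℂ) (y₁ y₂ y₃ y₄ : ℝ)
    (hfeas : Feas ahat ε η₁ η₂ W y₁ y₂ y₃ y₄)
    (hy : y₁ + y₂ + y₃ < 0)
    (hpos : 0 < -y₄ - y₁ * (nsq ahat - ε))
    (abar : Fin N → ℂ)
    (habar : abar = ((y₁ / Real.sqrt (-y₄ - y₁ * (nsq ahat - ε)) : ℝ) : ℂ) • ahat)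
    (hcond : 0 ≤ (y₁ + y₂ + y₃) ^ 2 + (y₁ + y₂ + y₃) * (nsq abar - (Matrix.trace W).re) +
        (star abar ⬝ᵥ W.mulVec abar).re - nsq abar * (Matrix.trace W).re) :
    ∃ w : Fin N → ℂ,
      Feas ahat ε η₁ η₂ (Matrix.vecMulVec w (star w)) y₁ y₂ y₃ y₄ ∧
      (Matrix.trace (Rhat * Matrix.vecMulVec w (star w))).re = (Matrix.trace (Rhat * W)).re ∧
      ((∀ (W' : Matrix (Fin N) (Fin N) ℂ) (y₁' y₂' y₃' y₄' : ℝ),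
          Feas ahat ε η₁ η₂ W' y₁' y₂' y₃' y₄' →
          (Matrix.trace (Rhat * W)).re ≤ (Matrix.trace (Rhat * W')).re) →
        ∀ (W' : Matrix (Fin N) (Fin N) ℂ) (y₁' y₂' y₃' y₄' : ℝ),
          Feas ahat ε η₁ η₂ W' y₁' y₂' y₃' y₄' →
          (Matrix.trace (Rhat * Matrix.vecMulVec w (star w))).re ≤
            (Matrix.trace (Rhat * W')).re) := by
  obtain ⟨hW, hy1, hy2, hy3, hlin, hyle, hblock⟩ := hfeas
  -- decompose W as a sum of outer products
  obtain ⟨B, hB⟩ : ∃ B : Matrix (Fin N) (Fin N) ℂ, W = Bᴴ * B := by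
    classical
    open scoped MatrixOrder in
    exact CStarAlgebra.nonneg_iff_eq_star_mul_self.mp hW.nonneg
  set p : Fin N → (Fin N → ℂ) := fun k => star (B k) with hp
  have hWsum : W = ∑ k, outer (p k) := by
    rw [hB]
    ext i j
    simp only [Matrix.mul_apply, Matrix.conjTranspose_apply, Matrix.sum_apply, outer,
      vecMulVec_apply, hp, Pi.star_apply, star_star]
  have htrsum : ∀ (v : Fin N → (Fin N → ℂ)), (Matrix.trace (∑ k, outer (v k))).re
      = ∑ k, nsq (v k) := by
    intro v
    rw [Matrix.trace_sum, Complex.re_sum]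
    exact Finset.sum_congr rfl fun k _ => trace_outer_re (v k)
  set t : ℝ := (Matrix.trace W).re with htdef
  have htr : t = ∑ k, nsq (p k) := by rw [htdef, hWsum, htrsum]
  rcases le_or_gt t 0 with ht | ht
  · -- degenerate case : W = 0
    have hallz : ∀ k, nsq (p k) = 0 := by
      intro k
      have h1 : ∑ k, nsq (p k) ≤ 0 := htr ▸ ht
      have h2 := Finset.sum_nonneg (fun k (_ : k ∈ Finset.univ) => nsq_nonneg (p k))
      have h3 : ∑ k, nsq (p k) = 0 := le_antisymm h1 h2
      exact (Finset.sum_eq_zero_iff_of_nonneg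
        (fun k _ => nsq_nonneg (p k))).mp h3 k (Finset.mem_univ k)
    have hW0 : W = 0 := by
      rw [hWsum]
      refine Finset.sum_eq_zero fun k _ => ?_
      have := nsq_eq_zero_iff.mp (hallz k)
      rw [this]
      ext i j
      simp [outer, vecMulVec_apply]
    have h00 : Matrix.vecMulVec (0 : Fin N → ℂ) (star (0 : Fin N → ℂ)) = W := by
      rw [hW0]
      ext i j
      simp [vecMulVec_apply]
    refine ⟨0, ?_, by rw [h00], ?_⟩
    · rw [h00]
      exact ⟨hW, hy1, hy2, hy3, hlin, hyle, hblock⟩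
    · intro hopt W' y₁' y₂' y₃' y₄' hfeas'
      rw [h00]
      exact hopt W' y₁' y₂' y₃' y₄' hfeas'
  · -- main case
    set m : ℝ := -(y₁ + y₂ + y₃) with hmdef
    have hm : 0 < m := by rw [hmdef]; linarith
    set μ : ℝ := (Matrix.trace (Rhat * W)).re / t with hμdef
    set A' : Matrix (Fin N) (Fin N) ℂ := Rhat - ((μ : ℝ) : ℂ) • 1 with hA'
    have hqf_sub : ∀ v : Fin N → ℂ, qf A' v = qf Rhat v - μ * nsq v := by
      intro v
      simp only [qf, hA', Matrix.sub_mulVec, dotProduct_sub, Complex.sub_re]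
      rw [smul_one_form_re]
    have hsum_tr : ∑ k, qf Rhat (p k) = (Matrix.trace (Rhat * W)).re := by
      rw [sum_qf Rhat p, ← hWsum]
    have hzero : ∑ k, qf A' (p k) = 0 := by
      simp only [hqf_sub, Finset.sum_sub_distrib, hsum_tr]
      rw [← Finset.mul_sum, ← htr, hμdef]
      field_simp
      ring
    obtain ⟨v, hvsum, hvzero⟩ := decomp A' N p hzero
    have hWv : W = ∑ k, outer (v k) := by rw [hWsum, hvsum]
    have hμk : ∀ k, qf Rhat (v k) = μ * nsq (v k) := by
      intro k
      have h := hvzero k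
      rw [hqf_sub] at h
      linarith
    have htv : ∑ k, nsq (v k) = t := by rw [htdef, hWv, htrsum]
    set d : ℝ := (star abar ⬝ᵥ W.mulVec abar).re with hddef
    have hd : d = ∑ k, Complex.normSq (star (v k) ⬝ᵥ abar) := by
      rw [hddef, ← tr_mul_outer W abar, hWv, Matrix.sum_mul, Matrix.trace_sum, Complex.re_sum]
      refine Finset.sum_congr rfl fun k _ => ?_
      rw [tr_mul_outer, outer_form_re]
    -- choose a good index
    have hex : ∃ k, v k ≠ 0 ∧
        0 ≤ t * Complex.normSq (star (v k) ⬝ᵥ abar) - d * nsq (v k) := by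
      by_contra hcon
      push_neg at hcon
      have hk0 : ∃ k0, v k0 ≠ 0 := by
        by_contra hall
        push_neg at hall
        have hz : ∑ k, nsq (v k) = 0 :=
          Finset.sum_eq_zero fun k _ => by rw [hall k]; simp [nsq]
        rw [htv] at hz
        linarith
      obtain ⟨k0, hk0⟩ := hk0
      set g : Fin N → ℝ :=
        fun k => t * Complex.normSq (star (v k) ⬝ᵥ abar) - d * nsq (v k) with hg
      have hsumg : ∑ k, g k = 0 := by
        simp only [hg, Finset.sum_sub_distrib, ← Finset.mul_sum, ← hd, htv]
        ring
      have hle : ∀ k ∈ Finset.univ, g k ≤ (fun _ => (0:ℝ)) k := by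
        intro k _
        by_cases hk : v k = 0
        · simp [hg, hk, nsq]
        · exact (hcon k hk).le
      have hlt : ∑ k, g k < ∑ k : Fin N, (fun _ => (0:ℝ)) k :=
        Finset.sum_lt_sum hle ⟨k0, Finset.mem_univ k0, hcon k0 hk0⟩
      simp only [Finset.sum_const, smul_zero] at hlt
      rw [hsumg] at hlt
      simp at hlt
    obtain ⟨k, hkne, hkg⟩ := hex
    have hτ : 0 < nsq (v k) := nsq_pos_of_ne hkne
    set τ : ℝ := nsq (v k) with hτdef
    set κ : ℝ := Real.sqrt (t / τ) with hκdef
    have hκ2 : κ ^ 2 = t / τ := Real.sq_sqrt (le_of_lt (div_pos ht hτ))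
    set w : Fin N → ℂ := (κ : ℂ) • v k with hw
    have hnw : nsq w = t := by
      rw [hw, nsq_smul, hκ2, ← hτdef]
      field_simp
    have hqw : qf Rhat w = (Matrix.trace (Rhat * W)).re := by
      rw [hw, qf_smul, hμk k, hκ2, ← hτdef, hμdef]
      field_simp
    have hPw : d ≤ Complex.normSq (star w ⬝ᵥ abar) := by
      rw [hw, dot_smul_left, Complex.normSq_mul, Complex.normSq_ofReal, ← sq, hκ2]
      rw [div_mul_eq_mul_div, le_div_iff₀ hτ]
      nlinarith [hkg]
    have htrw : (Matrix.trace (Rhat * Matrix.vecMulVec w (star w))).re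
        = (Matrix.trace (Rhat * W)).re := by
      have : Matrix.vecMulVec w (star w) = outer w := rfl
      rw [this, tr_mul_outer, ← hqw]
      rfl
    refine ⟨w, ?_, htrw, ?_⟩
    · refine ⟨?_, hy1, hy2, hy3, hlin, hyle, ?_⟩
      · refine psd_of_re (outer_isHermitian w) fun x => ?_
        rw [show Matrix.vecMulVec w (star w) = outer w from rfl, outer_form_re]
        exact Complex.normSq_nonneg _
      · rw [blk_psd_iff _ _ hpos]
        have houter_ab : (((-y₄ - y₁ * (nsq ahat - ε))⁻¹ : ℝ) : ℂ) • outer ((y₁ : ℂ) • ahat)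
            = outer abar := by
          set c : ℝ := -y₄ - y₁ * (nsq ahat - ε) with hcdef
          have hsq : (y₁ / Real.sqrt c) * (y₁ / Real.sqrt c) = c⁻¹ * (y₁ * y₁) := by
            rw [div_mul_div_comm, Real.mul_self_sqrt hpos.le]
            field_simp
          rw [habar, outer_smul_real, outer_smul_real, smul_smul, ← Complex.ofReal_mul, hsq]
        rw [houter_ab]
        have hH : (Matrix.vecMulVec w (star w) - (((y₁ + y₂ + y₃ : ℝ) : ℂ)) • 1
            - outer abar).IsHermitian :=
          ((outer_isHermitian w).sub (smul_one_isHermitian (y₁ + y₂ + y₃))).sub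
            (outer_isHermitian abar)
        refine psd_of_re hH fun x => ?_
        rw [Matrix.sub_mulVec, Matrix.sub_mulVec, dotProduct_sub, dotProduct_sub,
          Complex.sub_re, Complex.sub_re, outer_form_re, smul_one_form_re]
        have hform : (star x ⬝ᵥ (Matrix.vecMulVec w (star w)).mulVec x).re
            = Complex.normSq (star w ⬝ᵥ x) := outer_form_re w x
        rw [hform]
        -- core inequality
        have hP : (m + nsq w) * (nsq abar - m) ≤ Complex.normSq (star w ⬝ᵥ abar) := by
          refine le_trans ?_ hPw
          rw [hnw, hmdef]
          nlinarith [hcond]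
        have hcore := core_dot w abar x m hm (by rw [hnw]; exact ht) hP
        have hmy : y₁ + y₂ + y₃ = -m := by rw [hmdef]; ring
        rw [hmy]
        linarith [hcore]
    · intro hopt W' y₁' y₂' y₃' y₄' hfeas'
      rw [htrw]
      exact hopt W' y₁' y₂' y₃' y₄' hfeas'
end

section
/- Let a, w ∈ ℂ^N and let y < 0 be real. Then the Hermitian matrix −y I + w w^H is positive definite, and the inequality a^H (−y I + w w^H)^{-1} a ≤ 1 holds if and only if y² + y(‖a‖² − ‖w‖²) − (‖w‖²‖a‖² − |a^H w|²) ≥ 0. -/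
open Matrix
open scoped ComplexOrder

lemma vmv_mulVec {N : ℕ} (u v x : Fin N → ℂ) :
    (vecMulVec u v).mulVec x = (v ⬝ᵥ x) • u := by
  ext i
  simp only [mulVec, dotProduct, vecMulVec_apply, Pi.smul_apply, smul_eq_mul, Finset.sum_mul,
    Finset.mul_sum]
  congr 1; ext j; ring

lemma vmv_mul_vmv {N : ℕ} (u v u' v' : Fin N → ℂ) :
    vecMulVec u v * vecMulVec u' v' = (v ⬝ᵥ u') • vecMulVec u v' := by
  ext i j
  simp only [mul_apply, vecMulVec_apply, dotProduct, Matrix.smul_apply, smul_eq_mul, Finset.sum_mul,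
    Finset.mul_sum]
  congr 1; ext k; ring

lemma dot_self_eq {N : ℕ} (w : Fin N → ℂ) : star w ⬝ᵥ w = (nsq w : ℂ) := by
  simp only [dotProduct, nsq, Complex.ofReal_sum]
  congr 1; ext i
  rw [Complex.normSq_eq_conj_mul_self]; rfl

lemma smul_one_eq {N : ℕ} (r : ℝ) :
    (r : ℝ) • (1 : Matrix (Fin N) (Fin N) ℂ) = ((r : ℂ)) • 1 := by
  ext i j
  simp [Matrix.smul_apply, Complex.real_smul]

lemma psd_vmv {N : ℕ} (w : Fin N → ℂ) : (vecMulVec w (star w)).PosSemidef := by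
  rw [vecMulVec_eq Unit, show replicateRow Unit (star w) = (replicateCol Unit w)ᴴ from (conjTranspose_replicateCol _).symm]
  exact posSemidef_self_mul_conjTranspose _

lemma pd_smul_one {N : ℕ} {t : ℝ} (ht : 0 < t) :
    (((t : ℂ)) • (1 : Matrix (Fin N) (Fin N) ℂ)).PosDef := by
  rw [posDef_iff_dotProduct_mulVec]
  constructor
  · unfold Matrix.IsHermitian
    rw [conjTranspose_smul, conjTranspose_one]
    congr 1
    simp [Complex.ext_iff]
  · intro x hx
    rw [smul_mulVec, one_mulVec, dotProduct_smul, smul_eq_mul]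
    exact mul_pos (by exact_mod_cast ht) (dotProduct_star_self_pos_iff.mpr hx)

/-- For `y < 0`, the Hermitian matrix `−yI + wwᴴ` is positive definite, and
`aᴴ(−yI + wwᴴ)⁻¹ a ≤ 1` holds iff `y² + y(‖a‖² − ‖w‖²) − (‖w‖²‖a‖² − |aᴴw|²) ≥ 0`. -/
theorem stmt_8 {N : ℕ} (a w : Fin N → ℂ) (y : ℝ) (hy : y < 0) :
    ((-y : ℝ) • (1 : Matrix (Fin N) (Fin N) ℂ) + Matrix.vecMulVec w (star w)).PosDef ∧
    ((star a ⬝ᵥ ((-y : ℝ) • (1 : Matrix (Fin N) (Fin N) ℂ) +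
        Matrix.vecMulVec w (star w))⁻¹.mulVec a).re ≤ 1 ↔
      0 ≤ y ^ 2 + y * (nsq a - nsq w) -
        (nsq w * nsq a - ‖star a ⬝ᵥ w‖ ^ 2)) := by
  set t : ℝ := -y with htdef
  have ht : 0 < t := by simp [htdef]; linarith
  set s : ℝ := nsq w with hsdef
  set na : ℝ := nsq a with hnadef
  set p : ℝ := Complex.normSq (star a ⬝ᵥ w) with hpdef
  have hs : 0 ≤ s := Finset.sum_nonneg fun i _ => Complex.normSq_nonneg _
  have hp : 0 ≤ p := Complex.normSq_nonneg _
  have hts : 0 < t + s := by linarith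
  rw [smul_one_eq]
  set W : Matrix (Fin N) (Fin N) ℂ := vecMulVec w (star w) with hWdef
  set M : Matrix (Fin N) (Fin N) ℂ := (t : ℂ) • 1 + W with hMdef
  refine ⟨(pd_smul_one ht).add_posSemidef (psd_vmv w), ?_⟩
  -- inverse computation
  set α : ℂ := ((t : ℂ))⁻¹ with hα
  set β : ℂ := -(((t * (t + s) : ℝ) : ℂ))⁻¹ with hβ
  set B : Matrix (Fin N) (Fin N) ℂ := α • 1 + β • W with hBdef
  have htc : ((t : ℂ)) ≠ 0 := by exact_mod_cast ht.ne'
  have htsc : ((t : ℂ)) + (s : ℂ) ≠ 0 := by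
    rw [← Complex.ofReal_add]; exact_mod_cast hts.ne'
  have hW2 : W * W = (s : ℂ) • W := by rw [hWdef, vmv_mul_vmv, dot_self_eq]
  have h1 : (t : ℂ) * α = 1 := by rw [hα]; field_simp
  have h2 : (t : ℂ) * β + α + β * (s : ℂ) = 0 := by
    rw [hα, hβ]; push_cast; field_simp; ring
  have key : M * B = ((t : ℂ) * α) • (1 : Matrix (Fin N) (Fin N) ℂ) +
      ((t : ℂ) * β + α + β * (s : ℂ)) • W := by
    simp only [hMdef, hBdef, add_mul, mul_add, smul_mul_assoc, mul_smul_comm, one_mul,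
      mul_one, smul_smul, hW2, add_smul]
    module
  have hMB : M * B = 1 := by rw [key, h1, h2, one_smul, zero_smul, add_zero]
  have hinv : M⁻¹ = B := inv_eq_right_inv hMB
  rw [hinv]
  -- evaluate quadratic form
  have hdw : star w ⬝ᵥ a = (starRingEnd ℂ) (star a ⬝ᵥ w) := by
    simp [dotProduct, map_sum, _root_.map_mul, mul_comm]
  have hval : star a ⬝ᵥ B.mulVec a = ((t⁻¹ * na - (t * (t + s))⁻¹ * p : ℝ) : ℂ) := by
    rw [hBdef, add_mulVec, smul_mulVec, one_mulVec, smul_mulVec, vmv_mulVec,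
      dotProduct_add, dotProduct_smul, dotProduct_smul, dotProduct_smul, dot_self_eq,
      smul_eq_mul, smul_eq_mul, smul_eq_mul, hdw]
    have : (star a ⬝ᵥ w) * (starRingEnd ℂ) (star a ⬝ᵥ w) = (p : ℂ) := by
      rw [hpdef, Complex.normSq_eq_conj_mul_self]; ring
    rw [hα, hβ, mul_comm ((starRingEnd ℂ) (star a ⬝ᵥ w)), this, ← hnadef]
    push_cast
    ring
  rw [hval, Complex.ofReal_re, Complex.sq_norm]
  have hfrac : t⁻¹ * na - (t * (t + s))⁻¹ * p = (na * (t + s) - p) / (t * (t + s)) := by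
    field_simp
  rw [hfrac, div_le_one (by positivity)]
  have hyt : y = -t := by simp [htdef]
  rw [hyt, ← hpdef]
  constructor <;> intro h <;> nlinarith [h, ht, hts]
end

section
/- (Rank-one matrix decomposition.) Suppose X is an N×N complex Hermitian positive semidefinite matrix of rank R ≥ 1, and A and B are given N×N Hermitian matrices. Then there exist vectors x₁, ..., x_R ∈ ℂ^N such that X = Σ_{r=1}^R x_r x_r^H and, for every r = 1, ..., R, x_r^H A x_r = tr(AX)/R and x_r^H B x_r = tr(BX)/R. -/
open Matrix
open scoped ComplexOrder

namespace ROD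

variable {N : ℕ}

noncomputable def Q (C : Matrix (Fin N) (Fin N) ℂ) (v : Fin N → ℂ) : ℝ :=
  (star v ⬝ᵥ C.mulVec v).re

lemma conj_form (C : Matrix (Fin N) (Fin N) ℂ) (hC : C.IsHermitian) (v w : Fin N → ℂ) :
    starRingEnd ℂ (star v ⬝ᵥ C.mulVec w) = star w ⬝ᵥ C.mulVec v := by
  have hentry : ∀ p j, starRingEnd ℂ (C p j) = C j p := by
    intro p j
    conv_rhs => rw [← hC]
    simp [conjTranspose_apply]
  simp only [dotProduct, mulVec, Pi.star_apply, map_sum, _root_.map_mul, Finset.mul_sum]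
  rw [Finset.sum_comm]
  refine Finset.sum_congr rfl fun j _ => Finset.sum_congr rfl fun p _ => ?_
  rw [hentry]
  simp only [Complex.star_def, Complex.conj_conj]
  ring

lemma form_real (C : Matrix (Fin N) (Fin N) ℂ) (hC : C.IsHermitian) (v : Fin N → ℂ) :
    star v ⬝ᵥ C.mulVec v = (Q C v : ℂ) := by
  have h := conj_form C hC v v
  have him : (star v ⬝ᵥ C.mulVec v).im = 0 := by
    have h2 := congrArg Complex.im h
    simp only [Complex.conj_im] at h2
    linarith
  exact Complex.ext (by simp [Q]) (by simp [him])


lemma form_expand (C : Matrix (Fin N) (Fin N) ℂ) (v w : Fin N → ℂ) (a b : ℂ) :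
    star (a • v + b • w) ⬝ᵥ C.mulVec (a • v + b • w)
      = starRingEnd ℂ a * a * (star v ⬝ᵥ C.mulVec v)
        + starRingEnd ℂ b * b * (star w ⬝ᵥ C.mulVec w)
        + starRingEnd ℂ a * b * (star v ⬝ᵥ C.mulVec w)
        + starRingEnd ℂ b * a * (star w ⬝ᵥ C.mulVec v) := by
  simp only [star_add, star_smul, mulVec_add, mulVec_smul, dotProduct_add, add_dotProduct,
    smul_dotProduct, dotProduct_smul, smul_eq_mul, star_trivial, RCLike.star_def]
  ring

lemma outer_pair (v w : Fin N → ℂ) (a b : ℂ) (h : starRingEnd ℂ a * a + starRingEnd ℂ b * b = 1) :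
    vecMulVec (a • v + b • w) (star (a • v + b • w))
      + vecMulVec ((-(starRingEnd ℂ b)) • v + (starRingEnd ℂ a) • w)
          (star ((-(starRingEnd ℂ b)) • v + (starRingEnd ℂ a) • w))
      = vecMulVec v (star v) + vecMulVec w (star w) := by
  ext p q
  simp only [Matrix.add_apply, vecMulVec_apply, Pi.add_apply, Pi.smul_apply, Pi.star_apply,
    smul_eq_mul, star_add, star_mul', Complex.star_def, map_neg, Complex.conj_conj]
  linear_combination (v p * (starRingEnd ℂ (v q)) + w p * (starRingEnd ℂ (w q))) * h


lemma trace_mul_outer (C : Matrix (Fin N) (Fin N) ℂ) (v : Fin N → ℂ) :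
    Matrix.trace (C * vecMulVec v (star v)) = star v ⬝ᵥ C.mulVec v := by
  simp only [Matrix.trace, Matrix.diag, Matrix.mul_apply, vecMulVec_apply, Pi.star_apply,
    dotProduct, mulVec, Finset.mul_sum]
  refine Finset.sum_congr rfl fun j _ => Finset.sum_congr rfl fun p _ => by ring

lemma form_add_of_outer (C : Matrix (Fin N) (Fin N) ℂ) (x x' v w : Fin N → ℂ)
    (h : vecMulVec x (star x) + vecMulVec x' (star x')
       = vecMulVec v (star v) + vecMulVec w (star w)) :
    Q C x + Q C x' = Q C v + Q C w := by
  have := congrArg (fun M => (Matrix.trace (C * M)).re) h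
  simpa [Matrix.mul_add, Matrix.trace_add, trace_mul_outer, Q] using this

noncomputable def mu (c : ℂ) : ℂ :=
  if c = 0 then 1 else Complex.I * (starRingEnd ℂ c) / (‖c‖ : ℂ)

lemma mu_mul_self (c : ℂ) : starRingEnd ℂ (mu c) * mu c = 1 := by
  have habs : ‖mu c‖ = 1 := by
    unfold mu
    split
    · simp
    · rename_i hc
      rw [norm_div, norm_mul]
      simp only [Complex.norm_conj, Complex.norm_I, one_mul, Complex.norm_real, norm_norm]
      exact div_self (norm_ne_zero_iff.mpr hc)
  calc starRingEnd ℂ (mu c) * mu c = ((Complex.normSq (mu c) : ℝ) : ℂ) := by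
        rw [mul_comm, Complex.mul_conj]
    _ = 1 := by rw [← Complex.sq_norm, habs]; norm_num

lemma mu_re (c : ℂ) : (mu c * c).re = 0 := by
  by_cases hc : c = 0
  · simp [hc]
  · have h2 : (starRingEnd ℂ) c * c = (((‖c‖ : ℝ) ^ 2 : ℝ) : ℂ) := by
      rw [mul_comm, Complex.mul_conj, Complex.normSq_eq_norm_sq]
    have habs : (‖c‖ : ℂ) ≠ 0 := by
      exact_mod_cast norm_ne_zero_iff.mpr hc
    have h1 : mu c * c = (‖c‖ : ℂ) * Complex.I := by
      unfold mu
      rw [if_neg hc]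
      field_simp
      push_cast at h2 ⊢
      linear_combination h2
    rw [h1]
    simp

lemma add_conj_re_zero (W : ℂ) (h : W.re = 0) : W + starRingEnd ℂ W = 0 := by
  rw [Complex.add_conj, h]
  simp


lemma form_expand_re (C : Matrix (Fin N) (Fin N) ℂ) (hC : C.IsHermitian) (v w : Fin N → ℂ)
    (a b : ℂ) :
    star (a • v + b • w) ⬝ᵥ C.mulVec (a • v + b • w)
      = ((Complex.normSq a * Q C v + Complex.normSq b * Q C w
          + 2 * (starRingEnd ℂ a * b * (star v ⬝ᵥ C.mulVec w)).re : ℝ) : ℂ) := by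
  rw [form_expand, form_real C hC v, form_real C hC w, ← conj_form C hC v w]
  have h4 : starRingEnd ℂ b * a * starRingEnd ℂ (star v ⬝ᵥ C.mulVec w)
      = starRingEnd ℂ (starRingEnd ℂ a * b * (star v ⬝ᵥ C.mulVec w)) := by
    rw [_root_.map_mul, _root_.map_mul, Complex.conj_conj]
    ring
  rw [h4]
  have e1 : starRingEnd ℂ a * a = ((Complex.normSq a : ℝ) : ℂ) := by
    rw [mul_comm, Complex.mul_conj]
  have e2 : starRingEnd ℂ b * b = ((Complex.normSq b : ℝ) : ℂ) := by
    rw [mul_comm, Complex.mul_conj]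
  have e3 := Complex.add_conj (starRingEnd ℂ a * b * (star v ⬝ᵥ C.mulVec w))
  rw [e1, e2]
  push_cast
  push_cast at e3
  linear_combination e3

lemma normSq_mu (c : ℂ) : Complex.normSq (mu c) = 1 := by
  have h := mu_mul_self c
  rw [mul_comm, Complex.mul_conj] at h
  exact_mod_cast h

lemma Q_of_form (C : Matrix (Fin N) (Fin N) ℂ) (u : Fin N → ℂ) (r : ℝ)
    (h : star u ⬝ᵥ C.mulVec u = (r : ℂ)) : Q C u = r := by
  rw [Q, h, Complex.ofReal_re]

lemma rotate1 (A : Matrix (Fin N) (Fin N) ℂ) (hA : A.IsHermitian) (δ : ℝ) (v w : Fin N → ℂ)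
    (hv : δ ≤ Q A v) (hw : Q A w ≤ δ) :
    ∃ x x' : Fin N → ℂ,
      vecMulVec x (star x) + vecMulVec x' (star x')
        = vecMulVec v (star v) + vecMulVec w (star w) ∧ Q A x = δ := by
  set c := star v ⬝ᵥ A.mulVec w with hc
  set m := mu c with hm
  set t : ℝ := if Q A v = Q A w then 0 else (Q A v - δ) / (Q A v - Q A w) with ht
  have ht0 : 0 ≤ t := by
    rw [ht]
    split
    · exact le_refl 0
    · rename_i h
      have hd : 0 < Q A v - Q A w := by
        rcases lt_or_eq_of_le (hw.trans hv) with h1 | h1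
        · linarith
        · exact absurd h1.symm h
      exact div_nonneg (by linarith) hd.le
  have hd' : ∀ h : ¬ Q A v = Q A w, 0 < Q A v - Q A w := by
    intro h
    rcases lt_or_eq_of_le (hw.trans hv) with h1 | h1
    · linarith
    · exact absurd h1.symm h
  have ht1 : t ≤ 1 := by
    rw [ht]
    split
    · norm_num
    · rename_i h
      rw [div_le_one (hd' h)]
      linarith
  have htδ : (1 - t) * Q A v + t * Q A w = δ := by
    rw [ht]
    split
    · rename_i h
      have : Q A v = δ := le_antisymm (h ▸ hw) hv
      linarith
    · rename_i h
      have hd := hd' h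
      field_simp
      ring
  set a : ℂ := ((Real.sqrt (1 - t) : ℝ) : ℂ) with ha
  set b : ℂ := ((Real.sqrt t : ℝ) : ℂ) * m with hb
  have hnsa : Complex.normSq a = 1 - t := by
    rw [ha, Complex.normSq_ofReal, Real.mul_self_sqrt (by linarith)]
  have hnsb : Complex.normSq b = t := by
    rw [hb, Complex.normSq_mul, Complex.normSq_ofReal, Real.mul_self_sqrt ht0, normSq_mu,
      mul_one]
  have hsum1 : starRingEnd ℂ a * a + starRingEnd ℂ b * b = 1 := by
    rw [mul_comm, Complex.mul_conj, mul_comm, Complex.mul_conj, hnsa, hnsb]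
    push_cast
    ring
  refine ⟨a • v + b • w, -(starRingEnd ℂ b) • v + (starRingEnd ℂ a) • w,
    outer_pair v w a b hsum1, ?_⟩
  have hcrossre : (starRingEnd ℂ a * b * c).re = 0 := by
    have : starRingEnd ℂ a * b * c
        = ((Real.sqrt (1 - t) * Real.sqrt t : ℝ) : ℂ) * (m * c) := by
      rw [ha, hb, Complex.conj_ofReal]
      push_cast
      ring
    rw [this, Complex.re_ofReal_mul, mu_re, mul_zero]
  apply Q_of_form
  rw [form_expand_re A hA v w a b, ← hc, hnsa, hnsb, hcrossre]
  rw [Complex.ofReal_inj]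
  linarith


lemma rotate2 (A B : Matrix (Fin N) (Fin N) ℂ) (hA : A.IsHermitian) (hB : B.IsHermitian)
    (δ1 δ2 : ℝ) (v w : Fin N → ℂ) (hv1 : Q A v = δ1) (hw1 : Q A w = δ1)
    (hv2 : δ2 ≤ Q B v) (hw2 : Q B w ≤ δ2) :
    ∃ x x' : Fin N → ℂ,
      vecMulVec x (star x) + vecMulVec x' (star x')
        = vecMulVec v (star v) + vecMulVec w (star w) ∧
      Q A x = δ1 ∧ Q B x = δ2 ∧ Q A x' = δ1 := by
  set cA := star v ⬝ᵥ A.mulVec w with hcA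
  set cB := star v ⬝ᵥ B.mulVec w with hcB
  set m := mu cA with hm
  set g : ℝ → ℝ := fun θ => Real.cos θ ^ 2 * Q B v + Real.sin θ ^ 2 * Q B w
      + 2 * (Real.cos θ * Real.sin θ) * (m * cB).re with hg
  have hcont : ContinuousOn g (Set.Icc 0 (Real.pi / 2)) := by
    apply Continuous.continuousOn
    fun_prop
  have h0 : g 0 = Q B v := by simp [hg]
  have hpi : g (Real.pi / 2) = Q B w := by
    simp [hg, Real.cos_pi_div_two, Real.sin_pi_div_two]
  have hsub := intermediate_value_Icc' (by positivity : (0:ℝ) ≤ Real.pi / 2) hcont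
  have hδ : δ2 ∈ Set.Icc (g (Real.pi / 2)) (g 0) := by
    rw [h0, hpi]
    exact ⟨hw2, hv2⟩
  obtain ⟨θ, -, hθ⟩ := hsub hδ
  set a : ℂ := ((Real.cos θ : ℝ) : ℂ) with ha
  set b : ℂ := ((Real.sin θ : ℝ) : ℂ) * m with hb
  have hnsa : Complex.normSq a = Real.cos θ ^ 2 := by
    rw [ha, Complex.normSq_ofReal]
    ring
  have hnsb : Complex.normSq b = Real.sin θ ^ 2 := by
    rw [hb, Complex.normSq_mul, Complex.normSq_ofReal, normSq_mu, mul_one]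
    ring
  have hsum1 : starRingEnd ℂ a * a + starRingEnd ℂ b * b = 1 := by
    rw [mul_comm, Complex.mul_conj, mul_comm, Complex.mul_conj, hnsa, hnsb]
    push_cast
    exact_mod_cast congrArg (fun r : ℝ => (r : ℂ)) (Real.cos_sq_add_sin_sq θ)
  refine ⟨a • v + b • w, -(starRingEnd ℂ b) • v + (starRingEnd ℂ a) • w,
    outer_pair v w a b hsum1, ?_, ?_, ?_⟩
  · -- Q A x = δ1
    have hcrossre : (starRingEnd ℂ a * b * cA).re = 0 := by
      have : starRingEnd ℂ a * b * cA
          = ((Real.cos θ * Real.sin θ : ℝ) : ℂ) * (m * cA) := by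
        rw [ha, hb, Complex.conj_ofReal]
        push_cast
        ring
      rw [this, Complex.re_ofReal_mul, mu_re, mul_zero]
    apply Q_of_form
    rw [form_expand_re A hA v w a b, ← hcA, hnsa, hnsb, hcrossre, hv1, hw1]
    rw [Complex.ofReal_inj]
    linear_combination δ1 * (Real.cos_sq_add_sin_sq θ)
  · -- Q B x = δ2
    have hcrossre : (starRingEnd ℂ a * b * cB).re
        = Real.cos θ * Real.sin θ * (m * cB).re := by
      have : starRingEnd ℂ a * b * cB
          = ((Real.cos θ * Real.sin θ : ℝ) : ℂ) * (m * cB) := by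
        rw [ha, hb, Complex.conj_ofReal]
        push_cast
        ring
      rw [this, Complex.re_ofReal_mul]
    apply Q_of_form
    rw [form_expand_re B hB v w a b, ← hcB, hnsa, hnsb, hcrossre]
    rw [Complex.ofReal_inj]
    have hθ' : Real.cos θ ^ 2 * Q B v + Real.sin θ ^ 2 * Q B w
        + 2 * (Real.cos θ * Real.sin θ) * (m * cB).re = δ2 := hθ
    linear_combination hθ'
  · -- Q A x' = δ1
    have hns1 : Complex.normSq (-(starRingEnd ℂ b)) = Real.sin θ ^ 2 := by
      rw [Complex.normSq_neg, Complex.normSq_conj, hnsb]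
    have hns2 : Complex.normSq (starRingEnd ℂ a) = Real.cos θ ^ 2 := by
      rw [Complex.normSq_conj, hnsa]
    have hcrossre : (starRingEnd ℂ (-(starRingEnd ℂ b)) * (starRingEnd ℂ a) * cA).re = 0 := by
      have : starRingEnd ℂ (-(starRingEnd ℂ b)) * (starRingEnd ℂ a) * cA
          = ((-(Real.sin θ * Real.cos θ) : ℝ) : ℂ) * (m * cA) := by
        rw [ha, hb]
        simp only [map_neg, Complex.conj_conj, _root_.map_mul, Complex.conj_ofReal]
        push_cast
        ring
      rw [this, Complex.re_ofReal_mul, mu_re, mul_zero]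
    apply Q_of_form
    rw [form_expand_re A hA v w _ _, ← hcA, hns1, hns2, hcrossre, hv1, hw1]
    rw [Complex.ofReal_inj]
    linear_combination δ1 * (Real.sin_sq_add_cos_sq θ)


lemma exists_pair {n : ℕ} (f : Fin n → ℝ) (δ : ℝ) (hsum : ∑ r, f r = n * δ)
    (hbad : ¬ ∀ r, f r = δ) : ∃ i j, i ≠ j ∧ δ < f i ∧ f j < δ := by
  push_neg at hbad
  obtain ⟨r, hr⟩ := hbad
  have hzero : ∑ s, (f s - δ) = 0 := by
    rw [Finset.sum_sub_distrib]
    simp [hsum, Finset.card_univ, mul_comm]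
  have hpos : ∃ i, δ < f i := by
    by_contra h
    push_neg at h
    have h0 : ∀ s ∈ Finset.univ, f s - δ ≤ 0 := fun s _ => by linarith [h s]
    have := (Finset.sum_eq_zero_iff_of_nonpos h0).mp hzero r (Finset.mem_univ r)
    exact hr (by linarith)
  have hneg : ∃ j, f j < δ := by
    by_contra h
    push_neg at h
    have h0 : ∀ s ∈ Finset.univ, 0 ≤ f s - δ := fun s _ => by linarith [h s]
    have := (Finset.sum_eq_zero_iff_of_nonneg h0).mp hzero r (Finset.mem_univ r)
    exact hr (by linarith)
  obtain ⟨i, hi⟩ := hpos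
  obtain ⟨j, hj⟩ := hneg
  exact ⟨i, j, fun h => by rw [h] at hi; linarith, hi, hj⟩

lemma sum_update_pair {α : Type*} {M : Type*} [AddCommGroup M] {n : ℕ}
    (y : Fin n → α) (i j : Fin n) (hij : i ≠ j) (x x' : α) (g : α → M)
    (h : g x + g x' = g (y i) + g (y j)) :
    ∑ r, g (Function.update (Function.update y i x) j x' r) = ∑ r, g (y r) := by
  have key : ∀ (f : Fin n → α) (k : Fin n) (v : α),
      ∑ r, g (Function.update f k v r) = ∑ r, g (f r) - g (f k) + g v := by
    intro f k v
    have h1 : (fun r => g (Function.update f k v r))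
        = Function.update (fun r => g (f r)) k (g v) := by
      funext r
      exact Function.apply_update (fun _ s => g s) f k v r
    rw [h1, Finset.sum_update_of_mem (Finset.mem_univ k),
      Finset.sum_eq_sum_sdiff_singleton_add (Finset.mem_univ k) (fun r => g (f r))]
    abel
  rw [key, key]
  rw [Function.update_of_ne hij.symm]
  have hre : ∑ r, g (y r) - g (y i) + g x - g (y j) + g x'
      = ∑ r, g (y r) + ((g x + g x') - (g (y i) + g (y j))) := by abel
  rw [hre, h, sub_self, add_zero]


lemma phase1 (A : Matrix (Fin N) (Fin N) ℂ) (hA : A.IsHermitian) (δ : ℝ) :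
    ∀ k : ℕ, ∀ {n : ℕ} (y : Fin n → Fin N → ℂ),
      (Finset.univ.filter fun r => Q A (y r) ≠ δ).card ≤ k →
      (∑ r, Q A (y r) = (n : ℝ) * δ) →
      ∃ z : Fin n → Fin N → ℂ,
        (∑ r, vecMulVec (z r) (star (z r)) = ∑ r, vecMulVec (y r) (star (y r))) ∧
        ∀ r, Q A (z r) = δ := by
  intro k
  induction k with
  | zero =>
    intro n y hcard _
    refine ⟨y, rfl, fun r => ?_⟩
    by_contra hr
    have hmem : r ∈ Finset.univ.filter fun s => Q A (y s) ≠ δ := by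
      simp only [Finset.mem_filter, Finset.mem_univ, true_and]
      exact hr
    have := Finset.card_pos.mpr ⟨r, hmem⟩
    omega
  | succ k ih =>
    intro n y hcard hsum
    by_cases hall : ∀ r, Q A (y r) = δ
    · exact ⟨y, rfl, hall⟩
    · obtain ⟨i, j, hij, hi, hj⟩ := exists_pair (fun r => Q A (y r)) δ hsum hall
      obtain ⟨x, x', houter, hx⟩ := rotate1 A hA δ (y i) (y j) hi.le hj.le
      set z' := Function.update (Function.update y i x) j x' with hz'
      have hz'i : z' i = x := by
        rw [hz', Function.update_of_ne hij, Function.update_self]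
      have hz'j : z' j = x' := by rw [hz', Function.update_self]
      have houtersum : ∑ r, vecMulVec (z' r) (star (z' r))
          = ∑ r, vecMulVec (y r) (star (y r)) :=
        sum_update_pair y i j hij x x' (fun u => vecMulVec u (star u)) houter
      have hQpair : Q A x + Q A x' = Q A (y i) + Q A (y j) :=
        form_add_of_outer A x x' (y i) (y j) houter
      have hsum' : ∑ r, Q A (z' r) = (n : ℝ) * δ := by
        rw [sum_update_pair y i j hij x x' (fun u => Q A u) hQpair]
        exact hsum
      have hcard' : (Finset.univ.filter fun r => Q A (z' r) ≠ δ).card ≤ k := by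
        have hsubset : (Finset.univ.filter fun r => Q A (z' r) ≠ δ)
            ⊆ (Finset.univ.filter fun r => Q A (y r) ≠ δ).erase i := by
          intro r hr
          rw [Finset.mem_filter] at hr
          rcases eq_or_ne r i with rfl | hri
          · exact absurd (hz'i ▸ hx) hr.2
          · refine Finset.mem_erase.mpr ⟨hri, Finset.mem_filter.mpr ⟨Finset.mem_univ r, ?_⟩⟩
            rcases eq_or_ne r j with rfl | hrj
            · exact ne_of_lt hj
            · have heq : z' r = y r := by
                rw [hz', Function.update_of_ne hrj, Function.update_of_ne hri]
              rw [← heq]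
              exact hr.2
        have hi_mem : i ∈ Finset.univ.filter fun r => Q A (y r) ≠ δ := by
          simp only [Finset.mem_filter, Finset.mem_univ, true_and]
          exact ne_of_gt hi
        have h1 := Finset.card_le_card hsubset
        have h2 := Finset.card_erase_of_mem hi_mem
        have h3 := Finset.card_pos.mpr ⟨i, hi_mem⟩
        omega
      obtain ⟨z, hz1, hz2⟩ := ih z' hcard' hsum'
      exact ⟨z, hz1.trans houtersum, hz2⟩

lemma phase2 (A B : Matrix (Fin N) (Fin N) ℂ) (hA : A.IsHermitian) (hB : B.IsHermitian)
    (δ1 δ2 : ℝ) :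
    ∀ k : ℕ, ∀ {n : ℕ} (y : Fin n → Fin N → ℂ),
      (Finset.univ.filter fun r => Q B (y r) ≠ δ2).card ≤ k →
      (∀ r, Q A (y r) = δ1) →
      (∑ r, Q B (y r) = (n : ℝ) * δ2) →
      ∃ z : Fin n → Fin N → ℂ,
        (∑ r, vecMulVec (z r) (star (z r)) = ∑ r, vecMulVec (y r) (star (y r))) ∧
        ∀ r, Q A (z r) = δ1 ∧ Q B (z r) = δ2 := by
  intro k
  induction k with
  | zero =>
    intro n y hcard hQA _
    refine ⟨y, rfl, fun r => ⟨hQA r, ?_⟩⟩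
    by_contra hr
    have hmem : r ∈ Finset.univ.filter fun s => Q B (y s) ≠ δ2 := by
      simp only [Finset.mem_filter, Finset.mem_univ, true_and]
      exact hr
    have := Finset.card_pos.mpr ⟨r, hmem⟩
    omega
  | succ k ih =>
    intro n y hcard hQA hsum
    by_cases hall : ∀ r, Q B (y r) = δ2
    · exact ⟨y, rfl, fun r => ⟨hQA r, hall r⟩⟩
    · obtain ⟨i, j, hij, hi, hj⟩ := exists_pair (fun r => Q B (y r)) δ2 hsum hall
      obtain ⟨x, x', houter, hxA, hxB, hx'A⟩ :=
        rotate2 A B hA hB δ1 δ2 (y i) (y j) (hQA i) (hQA j) hi.le hj.le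
      set z' := Function.update (Function.update y i x) j x' with hz'
      have hz'i : z' i = x := by
        rw [hz', Function.update_of_ne hij, Function.update_self]
      have hz'j : z' j = x' := by rw [hz', Function.update_self]
      have houtersum : ∑ r, vecMulVec (z' r) (star (z' r))
          = ∑ r, vecMulVec (y r) (star (y r)) :=
        sum_update_pair y i j hij x x' (fun u => vecMulVec u (star u)) houter
      have hQpair : Q B x + Q B x' = Q B (y i) + Q B (y j) :=
        form_add_of_outer B x x' (y i) (y j) houter
      have hsum' : ∑ r, Q B (z' r) = (n : ℝ) * δ2 := by
        rw [sum_update_pair y i j hij x x' (fun u => Q B u) hQpair]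
        exact hsum
      have hQA' : ∀ r, Q A (z' r) = δ1 := by
        intro r
        rcases eq_or_ne r j with rfl | hrj
        · rw [hz'j]; exact hx'A
        · rcases eq_or_ne r i with rfl | hri
          · rw [hz'i]; exact hxA
          · have heq : z' r = y r := by
              rw [hz', Function.update_of_ne hrj, Function.update_of_ne hri]
            rw [heq]; exact hQA r
      have hcard' : (Finset.univ.filter fun r => Q B (z' r) ≠ δ2).card ≤ k := by
        have hsubset : (Finset.univ.filter fun r => Q B (z' r) ≠ δ2)
            ⊆ (Finset.univ.filter fun r => Q B (y r) ≠ δ2).erase i := by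
          intro r hr
          rw [Finset.mem_filter] at hr
          rcases eq_or_ne r i with rfl | hri
          · exact absurd (hz'i ▸ hxB) hr.2
          · refine Finset.mem_erase.mpr ⟨hri, Finset.mem_filter.mpr ⟨Finset.mem_univ r, ?_⟩⟩
            rcases eq_or_ne r j with rfl | hrj
            · exact ne_of_lt hj
            · have heq : z' r = y r := by
                rw [hz', Function.update_of_ne hrj, Function.update_of_ne hri]
              rw [← heq]
              exact hr.2
        have hi_mem : i ∈ Finset.univ.filter fun r => Q B (y r) ≠ δ2 := by
          simp only [Finset.mem_filter, Finset.mem_univ, true_and]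
          exact ne_of_gt hi
        have h1 := Finset.card_le_card hsubset
        have h2 := Finset.card_erase_of_mem hi_mem
        have h3 := Finset.card_pos.mpr ⟨i, hi_mem⟩
        omega
      obtain ⟨z, hz1, hz2⟩ := ih z' hcard' hQA' hsum'
      exact ⟨z, hz1.trans houtersum, hz2⟩

lemma exists_decomp (X : Matrix (Fin N) (Fin N) ℂ) (hX : X.PosSemidef) (R : ℕ)
    (hR : X.rank = R) :
    ∃ y : Fin R → Fin N → ℂ, X = ∑ r, vecMulVec (y r) (star (y r)) := by
  have hH : X.IsHermitian := hX.1
  have hcard : Fintype.card {i // hH.eigenvalues i ≠ 0} = R := by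
    rw [← hH.rank_eq_card_non_zero_eigs]
    exact hR
  set e := (Fintype.equivFinOfCardEq hcard).symm with he
  set U : Matrix (Fin N) (Fin N) ℂ :=
    (Matrix.IsHermitian.eigenvectorUnitary hH : Matrix (Fin N) (Fin N) ℂ) with hU
  set lam := hH.eigenvalues with hlamdef
  have hlam : ∀ i, 0 ≤ lam i := fun i => hX.eigenvalues_nonneg i
  refine ⟨fun r => fun p => ((Real.sqrt (lam (e r)) : ℝ) : ℂ) * U p (e r), ?_⟩
  have hspec := hH.spectral_theorem
  ext p q
  set f : Fin N → ℂ := fun i => U p i * ((lam i : ℝ) : ℂ) * starRingEnd ℂ (U q i) with hf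
  have hLHS : X p q = ∑ i, f i := by
    conv_lhs => rw [hspec, Unitary.conjStarAlgAut_apply]
    rw [Matrix.mul_apply]
    refine Finset.sum_congr rfl fun i _ => ?_
    rw [Matrix.mul_diagonal, Matrix.star_apply, hf]
    simp only [Function.comp_apply, hU, hlamdef, Complex.star_def]
    norm_num
    try ring_nf
  rw [hLHS]
  have hRHS : (∑ r : Fin R, vecMulVec
      ((fun p => ((Real.sqrt (lam (e r)) : ℝ) : ℂ) * U p (e r)))
      (star (fun p => ((Real.sqrt (lam (e r)) : ℝ) : ℂ) * U p (e r)))) p q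
      = ∑ r : Fin R, f (e r) := by
    rw [Matrix.sum_apply]
    refine Finset.sum_congr rfl fun r _ => ?_
    simp only [vecMulVec_apply, Pi.star_apply, hf, Complex.star_def, _root_.map_mul,
      Complex.conj_ofReal]
    have hsq : ((Real.sqrt (lam (e r)) : ℝ) : ℂ) * ((Real.sqrt (lam (e r)) : ℝ) : ℂ)
        = ((lam (e r) : ℝ) : ℂ) := by
      rw [← Complex.ofReal_mul, Real.mul_self_sqrt (hlam (e r))]
    calc ((Real.sqrt (lam (e r)) : ℝ) : ℂ) * U p (e r)
          * (((Real.sqrt (lam (e r)) : ℝ) : ℂ) * starRingEnd ℂ (U q (e r)))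
        = (((Real.sqrt (lam (e r)) : ℝ) : ℂ) * ((Real.sqrt (lam (e r)) : ℝ) : ℂ))
          * U p (e r) * starRingEnd ℂ (U q (e r)) := by ring
      _ = _ := by rw [hsq]; ring
  rw [hRHS]
  have hsub : ∑ r : Fin R, f (e r) = ∑ s : {i // lam i ≠ 0}, f s :=
    Equiv.sum_comp e (fun s : {i // lam i ≠ 0} => f (s : Fin N))
  rw [hsub]
  rw [← Finset.sum_subtype (Finset.univ.filter fun i => lam i ≠ 0)
    (fun i => by simp) f]
  rw [Finset.sum_filter_of_ne]
  intro i _ hfi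
  intro hlami
  apply hfi
  rw [hf]
  simp [hlami]

lemma trace_eq_sum_Q (C X : Matrix (Fin N) (Fin N) ℂ) (hC : C.IsHermitian) {n : ℕ}
    (y : Fin n → Fin N → ℂ) (hXy : X = ∑ r, vecMulVec (y r) (star (y r))) :
    Matrix.trace (C * X) = ((∑ r, Q C (y r) : ℝ) : ℂ) := by
  rw [hXy, Matrix.mul_sum, Matrix.trace_sum]
  push_cast
  refine Finset.sum_congr rfl fun r _ => ?_
  rw [trace_mul_outer, form_real C hC]

end ROD

/-- Rank-one matrix decomposition (Huang–Zhang): if `X ⪰ 0` has rank `R ≥ 1` and `A`, `B`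
are Hermitian, there are vectors `x₁, …, x_R` with `X = Σ x_r x_rᴴ` and
`x_rᴴ A x_r = tr(AX)/R`, `x_rᴴ B x_r = tr(BX)/R` for every `r`. -/
theorem stmt_9 {N : ℕ} (X A B : Matrix (Fin N) (Fin N) ℂ)
    (hX : X.PosSemidef) (hA : A.IsHermitian) (hB : B.IsHermitian)
    (R : ℕ) (hR : X.rank = R) (hR1 : 1 ≤ R) :
    ∃ x : Fin R → (Fin N → ℂ),
      X = ∑ r : Fin R, Matrix.vecMulVec (x r) (star (x r)) ∧
      ∀ r : Fin R,
        star (x r) ⬝ᵥ A.mulVec (x r) = Matrix.trace (A * X) / (R : ℂ) ∧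
        star (x r) ⬝ᵥ B.mulVec (x r) = Matrix.trace (B * X) / (R : ℂ) := by
  classical
  obtain ⟨y, hXy⟩ := ROD.exists_decomp X hX R hR
  have hRne : (R : ℝ) ≠ 0 := by
    have : 0 < R := hR1
    positivity
  set δ1 : ℝ := (∑ r, ROD.Q A (y r)) / R with hδ1
  have hsum1 : ∑ r, ROD.Q A (y r) = (R : ℝ) * δ1 := by
    rw [hδ1]
    field_simp
  obtain ⟨y1, hy1outer, hy1Q⟩ := ROD.phase1 A hA δ1
    (Finset.univ.filter fun r => ROD.Q A (y r) ≠ δ1).card y le_rfl hsum1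
  have hXy1 : X = ∑ r, vecMulVec (y1 r) (star (y1 r)) := hXy.trans hy1outer.symm
  set δ2 : ℝ := (∑ r, ROD.Q B (y1 r)) / R with hδ2
  have hsum2 : ∑ r, ROD.Q B (y1 r) = (R : ℝ) * δ2 := by
    rw [hδ2]
    field_simp
  obtain ⟨z, hzouter, hzQ⟩ := ROD.phase2 A B hA hB δ1 δ2
    (Finset.univ.filter fun r => ROD.Q B (y1 r) ≠ δ2).card y1 le_rfl hy1Q hsum2
  have hXz : X = ∑ r, vecMulVec (z r) (star (z r)) := hXy1.trans hzouter.symm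
  have hRneC : (R : ℂ) ≠ 0 := by exact_mod_cast (by positivity : ((R:ℝ)) ≠ 0)
  refine ⟨z, hXz, fun r => ⟨?_, ?_⟩⟩
  · rw [ROD.form_real A hA (z r), (hzQ r).1]
    rw [ROD.trace_eq_sum_Q A X hA z hXz]
    have : ∑ s, ROD.Q A (z s) = (R : ℝ) * δ1 := by
      rw [Finset.sum_congr rfl fun s _ => (hzQ s).1]
      simp [Finset.card_univ, mul_comm]
    rw [this]
    push_cast
    rw [mul_comm, mul_div_assoc, div_self hRneC, mul_one]
  · rw [ROD.form_real B hB (z r), (hzQ r).2]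
    rw [ROD.trace_eq_sum_Q B X hB z hXz]
    have : ∑ s, ROD.Q B (z s) = (R : ℝ) * δ2 := by
      rw [Finset.sum_congr rfl fun s _ => (hzQ s).2]
      simp [Finset.card_univ, mul_comm]
    rw [this]
    push_cast
    rw [mul_comm, mul_div_assoc, div_self hRneC, mul_one]
end

section
/- Let a ∈ ℂ^N be nonzero and w ∈ ℂ^N. Then w w^H ⪰ a a^H if and only if there exists λ ∈ ℂ with |λ| ≥ 1 such that w = λ a. -/
open Matrix
open scoped ComplexOrder

private lemma quad_vecMulVec {N : ℕ} (v x : Fin N → ℂ) :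
    star x ⬝ᵥ ((Matrix.vecMulVec v (star v)) *ᵥ x) =
      (starRingEnd ℂ) (star v ⬝ᵥ x) * (star v ⬝ᵥ x) := by
  simp only [Matrix.mulVec, dotProduct, Matrix.vecMulVec_apply, Pi.star_apply,
    Finset.mul_sum, Finset.sum_mul, map_sum, _root_.map_mul]
  rw [Finset.sum_comm]
  apply Finset.sum_congr rfl; intro i _
  apply Finset.sum_congr rfl; intro j _
  simp [Complex.conj_conj]
  ring

private lemma herm_vecMulVec {N : ℕ} (v : Fin N → ℂ) :
    (Matrix.vecMulVec v (star v)).IsHermitian := by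
  ext i j
  simp [Matrix.conjTranspose_apply, Matrix.vecMulVec_apply, mul_comm]

/-- For nonzero `a`, one has `wwᴴ ⪰ aaᴴ` iff `w = λa` for some `λ ∈ ℂ` with `|λ| ≥ 1`. -/
theorem stmt_11 {N : ℕ} (a w : Fin N → ℂ) (ha : a ≠ 0) :
    (Matrix.vecMulVec w (star w) - Matrix.vecMulVec a (star a)).PosSemidef ↔
      ∃ l : ℂ, 1 ≤ ‖l‖ ∧ w = l • a := by
  rw [Matrix.posSemidef_iff_dotProduct_mulVec]
  constructor
  · rintro ⟨_, hq⟩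
    -- key inequality on norms
    have key : ∀ x : Fin N → ℂ,
        Complex.normSq (star a ⬝ᵥ x) ≤ Complex.normSq (star w ⬝ᵥ x) := by
      intro x
      have := hq x
      rw [Matrix.sub_mulVec, dotProduct_sub, quad_vecMulVec, quad_vecMulVec] at this
      rw [← Complex.normSq_eq_conj_mul_self, ← Complex.normSq_eq_conj_mul_self] at this
      have h2 := (Complex.le_def.mp this).1
      simp only [Complex.zero_re, Complex.sub_re, Complex.ofReal_re] at h2
      linarith
    have hw : w ≠ 0 := by
      rintro rfl
      have h0 := key a
      rw [show star (0 : Fin N → ℂ) = 0 from star_zero _, zero_dotProduct,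
        map_zero] at h0
      have hns : Complex.normSq (star a ⬝ᵥ a) = 0 :=
        le_antisymm h0 (Complex.normSq_nonneg _)
      exact ha (dotProduct_star_self_eq_zero.mp (Complex.normSq_eq_zero.mp hns))
    have hww : star w ⬝ᵥ w ≠ 0 := fun h => hw (dotProduct_star_self_eq_zero.mp h)
    set c : ℂ := (star w ⬝ᵥ a) / (star w ⬝ᵥ w) with hc
    set x : Fin N → ℂ := a - c • w with hx
    have hwx : star w ⬝ᵥ x = 0 := by
      simp [hx, dotProduct_sub, dotProduct_smul, hc, smul_eq_mul,
        div_mul_cancel₀ _ hww]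
    have hax : star a ⬝ᵥ x = star x ⬝ᵥ x := by
      have : star x = star a - (starRingEnd ℂ) c • star w := by
        ext i; simp [hx, Complex.conj_conj, mul_comm]
      rw [this, sub_dotProduct, smul_dotProduct, hwx, smul_zero, sub_zero]
    have hx0 : x = 0 := by
      have h1 := key x
      rw [hwx, map_zero, hax] at h1
      have h2 : Complex.normSq (star x ⬝ᵥ x) = 0 :=
        le_antisymm h1 (Complex.normSq_nonneg _)
      exact dotProduct_star_self_eq_zero.mp (Complex.normSq_eq_zero.mp h2)
    have haw : a = c • w := by
      have := sub_eq_zero.mp (hx ▸ hx0)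
      exact this
    have hc0 : c ≠ 0 := by
      intro h
      apply ha
      rw [haw, h, zero_smul]
    -- test with x = w
    have h3 := key w
    have haw' : star a ⬝ᵥ w = (starRingEnd ℂ) c * (star w ⬝ᵥ w) := by
      conv_lhs => rw [haw]
      have : star (c • w) = (starRingEnd ℂ) c • star w := by
        ext i; simp [mul_comm]
      rw [this, smul_dotProduct, smul_eq_mul]
    rw [haw', Complex.normSq_mul, Complex.normSq_conj] at h3
    have hns : 0 < Complex.normSq (star w ⬝ᵥ w) := by
      rcases (Complex.normSq_pos).mpr hww with h; exact h
    have hcle : Complex.normSq c ≤ 1 := by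
      by_contra hlt
      push_neg at hlt
      nlinarith
    refine ⟨c⁻¹, ?_, ?_⟩
    · rw [norm_inv]
      rw [one_le_inv_iff₀]
      constructor
      · exact norm_pos_iff.mpr hc0
      · have := Complex.sq_norm c
        nlinarith [norm_nonneg c, Complex.sq_norm c]
    · rw [haw, smul_smul, inv_mul_cancel₀ hc0, one_smul]
  · rintro ⟨l, hl, rfl⟩
    constructor
    · have h1 := herm_vecMulVec (N := N) (l • a)
      have h2 := herm_vecMulVec (N := N) a
      exact h1.sub h2
    · intro x
      rw [Matrix.sub_mulVec, dotProduct_sub, quad_vecMulVec, quad_vecMulVec]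
      have hs : star (l • a) ⬝ᵥ x = (starRingEnd ℂ) l * (star a ⬝ᵥ x) := by
        have : star (l • a) = (starRingEnd ℂ) l • star a := by
          ext i; simp [mul_comm]
        rw [this, smul_dotProduct, smul_eq_mul]
      rw [hs, ← Complex.normSq_eq_conj_mul_self, ← Complex.normSq_eq_conj_mul_self,
        Complex.normSq_mul, Complex.normSq_conj]
      rw [Complex.le_def]
      constructor
      · have h1 : 1 ≤ Complex.normSq l := by
          have := Complex.sq_norm l
          nlinarith
        have := Complex.normSq_nonneg (star a ⬝ᵥ x)
        simp only [Complex.zero_re, Complex.sub_re, ← Complex.ofReal_mul, Complex.ofReal_re]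
        nlinarith
      · simp
end

section
/- (LMI representation of the sum of K largest eigenvalues.) Let W be an N×N complex Hermitian matrix, let 1 ≤ K ≤ N, and let t ∈ ℝ. Let S_K(W) = λ₁(W) + ... + λ_K(W) be the sum of the K largest eigenvalues of W. Then S_K(W) ≤ t if and only if there exist an N×N Hermitian matrix Z and a real number s such that t − K s − tr(Z) ≥ 0, Z − W + s I ⪰ 0, and Z ⪰ 0. -/
open Matrix
open scoped ComplexOrder

noncomputable def eigDesc {N : ℕ} {A : Matrix (Fin N) (Fin N) ℂ} (hA : A.IsHermitian)
    (i : Fin N) : ℝ :=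
  hA.eigenvalues (Tuple.sort hA.eigenvalues i.rev)

namespace Stmt12Aux

variable {N : ℕ} (W : Matrix (Fin N) (Fin N) ℂ) (hW : W.IsHermitian)

/-- the permutation giving descending eigenvalue order -/
noncomputable def e : Equiv.Perm (Fin N) := Fin.revPerm.trans (Tuple.sort hW.eigenvalues)

noncomputable def μ (i : Fin N) : ℝ := hW.eigenvalues (e W hW i)

lemma μ_eq_eigDesc (i : Fin N) : μ W hW i = eigDesc hW i := rfl

lemma μ_antitone : Antitone (μ W hW) := fun i j hij =>
  Tuple.monotone_sort hW.eigenvalues (Fin.rev_le_rev.mpr hij)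

noncomputable def v (i : Fin N) : Fin N → ℂ := ⇑(hW.eigenvectorBasis (e W hW i))

noncomputable def out (i : Fin N) : Matrix (Fin N) (Fin N) ℂ :=
  vecMulVec (v W hW i) (star (v W hW i))

lemma v_inner (i j : Fin N) :
    ∑ a, (starRingEnd ℂ) (v W hW i a) * v W hW j a = if i = j then 1 else 0 := by
  have h := orthonormal_iff_ite.mp hW.eigenvectorBasis.orthonormal (e W hW i) (e W hW j)
  rw [PiLp.inner_apply] at h
  simpa [v, RCLike.inner_apply, mul_comm] using h

lemma out_posSemidef (i : Fin N) : (out W hW i).PosSemidef := by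
  refine PosSemidef.of_dotProduct_mulVec_nonneg ?_ ?_
  · ext a b
    simp [out, vecMulVec_apply, conjTranspose_apply, mul_comm]
  · intro x
    have hc : star x ⬝ᵥ (out W hW i *ᵥ x)
        = star (star (v W hW i) ⬝ᵥ x) * (star (v W hW i) ⬝ᵥ x) := by
      simp only [out, dotProduct, mulVec, vecMulVec_apply, star_sum, star_mul', star_star,
        Pi.star_apply, Finset.mul_sum, Finset.sum_mul]
      rw [Finset.sum_comm]
      refine Finset.sum_congr rfl fun a _ => Finset.sum_congr rfl fun b _ => ?_
      ring
    rw [hc]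
    exact star_mul_self_nonneg _

lemma W_eq : W = ∑ i, ((μ W hW i : ℝ) : ℂ) • out W hW i := by
  have base : W = ∑ j, ((hW.eigenvalues j : ℝ) : ℂ) •
      vecMulVec (⇑(hW.eigenvectorBasis j)) (star ⇑(hW.eigenvectorBasis j)) := by
    conv_lhs => rw [hW.spectral_theorem, Unitary.conjStarAlgAut_apply]
    ext a b
    simp only [mul_apply, diagonal_apply, Function.comp_apply, RCLike.ofReal_alg,
      Matrix.IsHermitian.eigenvectorUnitary_apply, star_apply, Matrix.sum_apply,
      Matrix.smul_apply, vecMulVec_apply, Pi.star_apply, smul_eq_mul, ite_mul, zero_mul,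
      mul_ite, mul_zero, Complex.real_smul,
      Finset.sum_ite_eq', Finset.mem_univ, if_true, mul_one]
    refine Finset.sum_congr rfl fun x _ => ?_
    simp only [RCLike.star_def]
    ring
  conv_lhs => rw [base, ← Equiv.sum_comp (e W hW) (fun j => ((hW.eigenvalues j : ℝ) : ℂ) •
      vecMulVec (⇑(hW.eigenvectorBasis j)) (star ⇑(hW.eigenvectorBasis j)))]
  rfl

lemma sum_out : ∑ i, out W hW i = 1 := by
  have base : ∑ j, vecMulVec (⇑(hW.eigenvectorBasis j)) (star ⇑(hW.eigenvectorBasis j))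
      = (1 : Matrix (Fin N) (Fin N) ℂ) := by
    have h : (hW.eigenvectorUnitary : Matrix (Fin N) (Fin N) ℂ) *
        star (hW.eigenvectorUnitary : Matrix (Fin N) (Fin N) ℂ) = 1 :=
      Matrix.mem_unitaryGroup_iff.mp hW.eigenvectorUnitary.2
    ext a b
    rw [← h, mul_apply]
    simp [Matrix.sum_apply, vecMulVec_apply, Matrix.IsHermitian.eigenvectorUnitary_apply,
      RCLike.star_def]
  rw [← base, ← Equiv.sum_comp (e W hW) (fun j =>
    vecMulVec (⇑(hW.eigenvectorBasis j)) (star ⇑(hW.eigenvectorBasis j)))]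
  rfl

lemma trace_out (i : Fin N) : (out W hW i).trace = 1 := by
  have h := v_inner W hW i i
  rw [if_pos rfl] at h
  rw [Matrix.trace, ← h]
  refine Finset.sum_congr rfl fun a _ => ?_
  simp [out, Matrix.diag, vecMulVec_apply, RCLike.star_def, mul_comm]

lemma trace_out_mul_out (i j : Fin N) :
    (out W hW i * out W hW j).trace = if i = j then 1 else 0 := by
  have key : (out W hW i * out W hW j).trace
      = (∑ b, (starRingEnd ℂ) (v W hW i b) * v W hW j b) *
        (∑ a, (starRingEnd ℂ) (v W hW j a) * v W hW i a) := by
    rw [Matrix.trace, Finset.sum_mul_sum]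
    simp only [Matrix.diag, mul_apply, out, vecMulVec_apply, Pi.star_apply, RCLike.star_def,
      Finset.sum_mul, Finset.mul_sum]
    rw [Finset.sum_comm]
    refine Finset.sum_congr rfl fun a _ => Finset.sum_congr rfl fun b _ => ?_
    ring
  rw [key, v_inner, v_inner]
  by_cases h : i = j
  · simp [h]
  · simp [h, Ne.symm h]

lemma psd_real_smul {M : Matrix (Fin N) (Fin N) ℂ} (hM : M.PosSemidef) {c : ℝ} (hc : 0 ≤ c) :
    ((c : ℂ) • M).PosSemidef := by
  refine PosSemidef.of_dotProduct_mulVec_nonneg ?_ ?_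
  · rw [IsHermitian, conjTranspose_smul, hM.1.eq]
    congr 1
    simp
  · intro x
    rw [smul_mulVec, dotProduct_smul, smul_eq_mul]
    exact mul_nonneg (by exact_mod_cast hc) (hM.dotProduct_mulVec_nonneg x)

lemma psd_trace_re_nonneg {M : Matrix (Fin N) (Fin N) ℂ} (hM : M.PosSemidef) :
    0 ≤ M.trace.re := by
  rw [Matrix.trace, Complex.re_sum]
  refine Finset.sum_nonneg fun i _ => ?_
  have h := hM.dotProduct_mulVec_nonneg (Pi.single i 1)
  have heq : star (Pi.single i 1) ⬝ᵥ M *ᵥ Pi.single i 1 = M i i := by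
    simp [dotProduct, mulVec, Pi.single_apply]
  rw [heq] at h
  exact (Complex.le_def.mp h).1

lemma trace_mul_re_nonneg {A B : Matrix (Fin N) (Fin N) ℂ} (hA : A.PosSemidef)
    (hB : B.PosSemidef) : 0 ≤ (A * B).trace.re := by
  open scoped MatrixOrder in
  obtain ⟨C, rfl⟩ := CStarAlgebra.nonneg_iff_eq_star_mul_self.mp hB.nonneg
  rw [← mul_assoc, Matrix.trace_mul_cycle]
  exact psd_trace_re_nonneg (hA.mul_mul_conjTranspose_same C)

end Stmt12Aux


/-- LMI representation of the sum of the `K` largest eigenvalues: for Hermitian `W`,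
`λ₁(W) + … + λ_K(W) ≤ t` iff there exist Hermitian `Z` and `s ∈ ℝ` with
`t − Ks − tr Z ≥ 0`, `Z − W + sI ⪰ 0` and `Z ⪰ 0`. -/
theorem stmt_12 {N K : ℕ} (hK1 : 1 ≤ K) (hKN : K ≤ N)
    (W : Matrix (Fin N) (Fin N) ℂ) (hW : W.IsHermitian) (t : ℝ) :
    (∑ i : Fin K, eigDesc hW ⟨(i : ℕ), lt_of_lt_of_le i.2 hKN⟩) ≤ t ↔
    ∃ (Z : Matrix (Fin N) (Fin N) ℂ) (s : ℝ), Z.IsHermitian ∧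
      0 ≤ t - (K : ℝ) * s - (Matrix.trace Z).re ∧
      (Z - W + (s : ℂ) • 1).PosSemidef ∧ Z.PosSemidef := by
  classical
  have hWeq := Stmt12Aux.W_eq W hW
  have hsum_out := Stmt12Aux.sum_out W hW
  have htraceO := Stmt12Aux.trace_out W hW
  have htraceOO := Stmt12Aux.trace_out_mul_out W hW
  have hOpsd := Stmt12Aux.out_posSemidef W hW
  have hmono := Stmt12Aux.μ_antitone W hW
  have hdesc : ∀ i : Fin N, Stmt12Aux.μ W hW i = eigDesc hW i := Stmt12Aux.μ_eq_eigDesc W hW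
  set m := Stmt12Aux.μ W hW with hm
  set O := Stmt12Aux.out W hW with hO
  set TK : Finset (Fin N) := Finset.univ.filter (fun i => (i : ℕ) < K) with hTK
  have hmem : ∀ i : Fin N, i ∈ TK ↔ (i : ℕ) < K := by intro i; simp [hTK]
  have hTKmap : TK = Finset.univ.map
      ⟨fun i : Fin K => (⟨(i : ℕ), lt_of_lt_of_le i.2 hKN⟩ : Fin N),
        fun a b h => by simpa [Fin.ext_iff] using congrArg Fin.val h⟩ := by
    ext j
    simp only [hmem, Finset.mem_map, Finset.mem_univ, true_and, Function.Embedding.coeFn_mk]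
    constructor
    · intro hj
      exact ⟨⟨(j : ℕ), hj⟩, Fin.ext rfl⟩
    · rintro ⟨a, rfl⟩
      exact a.2
  have hcard : TK.card = K := by rw [hTKmap]; simp
  set S := ∑ i ∈ TK, m i with hS
  have hsum_eq : (∑ i : Fin K, eigDesc hW ⟨(i : ℕ), lt_of_lt_of_le i.2 hKN⟩) = S := by
    rw [hS, hTKmap, Finset.sum_map]
    refine Finset.sum_congr rfl fun i _ => ?_
    rw [← hdesc]
    rfl
  have hcomb : ∀ (c : Fin N → ℝ) (s : ℝ),
      (∑ i, ((c i : ℝ) : ℂ) • O i) - W + (s : ℂ) • 1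
        = ∑ i, ((c i - m i + s : ℝ) : ℂ) • O i := by
    intro c s
    rw [hWeq, ← hsum_out, Finset.smul_sum, ← Finset.sum_sub_distrib, ← Finset.sum_add_distrib]
    refine Finset.sum_congr rfl fun i _ => ?_
    push_cast
    rw [add_smul, sub_smul]
  constructor
  · -- forward
    intro ht
    rw [hsum_eq] at ht
    have hK1N : K - 1 < N := by omega
    set s : ℝ := m ⟨K - 1, hK1N⟩ with hs
    set g : Fin N → ℝ := fun i => if (i : ℕ) < K then m i - s else 0 with hg
    have hgnn : ∀ i : Fin N, 0 ≤ g i := by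
      intro i
      rw [hg]
      by_cases hi : (i : ℕ) < K
      · simp only [hi, if_true]
        have : (⟨K - 1, hK1N⟩ : Fin N) ≤ i → m i ≤ s := fun h => hmono h
        have h2 : i ≤ (⟨K - 1, hK1N⟩ : Fin N) := by rw [Fin.le_def]; simp; omega
        have := hmono h2
        linarith
      · simp [hi]
    refine ⟨∑ i, ((g i : ℝ) : ℂ) • O i, s, ?_, ?_, ?_, ?_⟩
    · -- Hermitian
      have : (∑ i, ((g i : ℝ) : ℂ) • O i).PosSemidef := by
        refine Finset.sum_induction _ _ (fun a b ha hb => ha.add hb) Matrix.PosSemidef.zero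
          fun i _ => Stmt12Aux.psd_real_smul (hOpsd i) (hgnn i)
      exact this.isHermitian
    · -- trace inequality
      have htr : (∑ i, ((g i : ℝ) : ℂ) • O i).trace = ((∑ i, g i : ℝ) : ℂ) := by
        rw [Matrix.trace_sum]
        push_cast
        refine Finset.sum_congr rfl fun i _ => ?_
        rw [Matrix.trace_smul, htraceO, smul_eq_mul, mul_one]
      rw [htr, Complex.ofReal_re]
      have hgs : ∑ i, g i = S - K * s := by
        rw [hg, ← Finset.sum_filter]
        have heq : Finset.univ.filter (fun i : Fin N => (i : ℕ) < K) = TK := rfl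
        rw [heq, Finset.sum_sub_distrib, Finset.sum_const, hcard, ← hS, nsmul_eq_mul]
      rw [hgs]
      linarith
    · -- Z - W + s • 1 PSD
      rw [hcomb g s]
      refine Finset.sum_induction _ _ (fun a b ha hb => ha.add hb) Matrix.PosSemidef.zero
        fun i _ => Stmt12Aux.psd_real_smul (hOpsd i) ?_
      rw [hg]
      by_cases hi : (i : ℕ) < K
      · simp [hi]
      · simp only [hi, if_false]
        have h2 : (⟨K - 1, hK1N⟩ : Fin N) ≤ i := by rw [Fin.le_def]; simp; omega
        have := hmono h2
        linarith
    · -- Z PSD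
      refine Finset.sum_induction _ _ (fun a b ha hb => ha.add hb) Matrix.PosSemidef.zero
        fun i _ => Stmt12Aux.psd_real_smul (hOpsd i) (hgnn i)
  · -- backward
    rintro ⟨Z, s, _hZh, h1, h2, h3⟩
    rw [hsum_eq]
    set P : Matrix (Fin N) (Fin N) ℂ := ∑ i ∈ TK, O i with hP
    have hPpsd : P.PosSemidef := by
      refine Finset.sum_induction _ _ (fun a b ha hb => ha.add hb) Matrix.PosSemidef.zero
        fun i _ => hOpsd i
    have h1Ppsd : ((1 : Matrix (Fin N) (Fin N) ℂ) - P).PosSemidef := by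
      have hPc : (1 : Matrix (Fin N) (Fin N) ℂ) - P = ∑ i ∈ TKᶜ, O i := by
        rw [← hsum_out, ← Finset.sum_add_sum_compl TK O, hP, add_sub_cancel_left]
      rw [hPc]
      refine Finset.sum_induction _ _ (fun a b ha hb => ha.add hb) Matrix.PosSemidef.zero
        fun i _ => hOpsd i
    have htraceP : P.trace = (K : ℂ) := by
      rw [hP, Matrix.trace_sum]
      simp only [htraceO]
      rw [Finset.sum_const, hcard, nsmul_eq_mul, mul_one]
    have hPW : (P * W).trace = ((S : ℝ) : ℂ) := by
      rw [hWeq, hP, Finset.sum_mul, Matrix.trace_sum, hS]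
      push_cast
      refine Finset.sum_congr rfl fun i hi => ?_
      rw [Finset.mul_sum, Matrix.trace_sum]
      simp [mul_smul_comm, Matrix.trace_smul, htraceOO, smul_eq_mul, mul_ite,
        Finset.sum_ite_eq, Finset.sum_ite_eq']
    have e1 : (P * (Z - W + (s : ℂ) • 1)).trace
        = (P * Z).trace - ((S : ℝ) : ℂ) + ((s * K : ℝ) : ℂ) := by
      rw [mul_add, mul_sub, Matrix.trace_add, Matrix.trace_sub, hPW, mul_smul_comm, mul_one,
        Matrix.trace_smul, htraceP, smul_eq_mul]
      push_cast
      ring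
    have L1 := Stmt12Aux.trace_mul_re_nonneg hPpsd h2
    rw [e1] at L1
    simp only [Complex.add_re, Complex.sub_re, Complex.ofReal_re] at L1
    have e2 : ((1 - P) * Z).trace = Z.trace - (P * Z).trace := by
      rw [sub_mul, one_mul, Matrix.trace_sub]
    have L2 := Stmt12Aux.trace_mul_re_nonneg h1Ppsd h3
    rw [e2] at L2
    simp only [Complex.sub_re] at L2
    linarith
end

section
/- (Proposition 4.) Under the stated primal feasibility, dual feasibility, complementary slackness conditions, z₁ = tr(R̂ W) > 0, and the strict inequality x λ_{N−1}(C̄) + y₁ + y₂ < 0, the following hold: (1) x < 0; (2) z₁ = tr(C̄ Z)/Δ₀ and z₂ = 0; (3) y₁ + y₂ > 0. -/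
open Matrix
open scoped ComplexOrder

private lemma trace_mul_re_nonneg' {N : ℕ} {A B : Matrix (Fin N) (Fin N) ℂ}
    (hA : A.PosSemidef) (hB : B.PosSemidef) : 0 ≤ (Matrix.trace (A * B)).re := by
  obtain ⟨P, rfl⟩ : ∃ P : Matrix (Fin N) (Fin N) ℂ, A = Pᴴ * P := by
    open scoped MatrixOrder in
    exact CStarAlgebra.nonneg_iff_eq_star_mul_self.mp hA.nonneg
  obtain ⟨Q, rfl⟩ : ∃ Q : Matrix (Fin N) (Fin N) ℂ, B = Qᴴ * Q := by
    open scoped MatrixOrder in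
    exact CStarAlgebra.nonneg_iff_eq_star_mul_self.mp hB.nonneg
  have h : Matrix.trace (Pᴴ * P * (Qᴴ * Q)) = Matrix.trace ((Q * Pᴴ)ᴴ * (Q * Pᴴ)) := by
    rw [conjTranspose_mul, conjTranspose_conjTranspose]
    rw [show Pᴴ * P * (Qᴴ * Q) = Pᴴ * (P * Qᴴ * Q) by noncomm_ring,
      Matrix.trace_mul_comm]
    noncomm_ring
  rw [h]
  set M := Q * Pᴴ
  rw [Matrix.trace]
  simp only [Matrix.diag, Matrix.mul_apply, Matrix.conjTranspose_apply]
  rw [Complex.re_sum]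
  refine Finset.sum_nonneg fun j _ => ?_
  rw [Complex.re_sum]
  refine Finset.sum_nonneg fun i _ => ?_
  simpa [Complex.normSq_apply] using Complex.normSq_nonneg (M i j)

/-- Proposition 4: under primal feasibility, dual feasibility, complementary slackness,
`z₁ = tr(R̂W) > 0`, and `xλ_{N−1}(C̄) + y₁ + y₂ < 0`, one has (1) `x < 0`;
(2) `z₁ = tr(C̄Z)/Δ₀` and `z₂ = 0`; (3) `y₁ + y₂ > 0`. -/
theorem stmt_15 {N : ℕ} (hN : 2 ≤ N) (η₁ η₂ : ℝ) (hη₁0 : 0 ≤ η₁) (hη₁N : η₁ < N)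
    (hη₂ : 0 ≤ η₂) (Δ₀ : ℝ) (hΔ₀ : 0 < Δ₀)
    (Cbar : Matrix (Fin N) (Fin N) ℂ) (hC : Cbar.PosSemidef)
    (Rhat : Matrix (Fin N) (Fin N) ℂ) (hR : Rhat.IsHermitian)
    (W Z : Matrix (Fin N) (Fin N) ℂ) (x y₁ y₂ z₁ z₂ : ℝ)
    -- primal feasibility
    (hW : W.PosSemidef) (hx : x ≤ 0) (hy₁ : 0 ≤ y₁) (hy₂ : y₂ ≤ 0)
    (hlin : Δ₀ * x + ((N : ℝ) - η₁) * y₁ + ((N : ℝ) + η₂) * y₂ = 1)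
    (hLMI : (W - (x : ℂ) • Cbar - ((y₁ + y₂ : ℝ) : ℂ) • 1).PosSemidef)
    (hvalid : x * eigDesc hC.isHermitian ⟨N - 2, by omega⟩ + y₁ + y₂ ≤ 0)
    -- dual feasibility
    (hZ : Z.PosSemidef) (hz₂ : 0 ≤ z₂) (hRZ : (Rhat - Z).PosSemidef)
    (hd1 : (Matrix.trace (Cbar * Z)).re - Δ₀ * z₁ +
        eigDesc hC.isHermitian ⟨N - 2, by omega⟩ * z₂ ≤ 0)
    (hd2 : z₁ * ((N : ℝ) - η₁) ≤ (Matrix.trace Z).re + z₂)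
    (hd3 : (Matrix.trace Z).re + z₂ ≤ z₁ * ((N : ℝ) + η₂))
    -- complementary slackness
    (hc1 : Matrix.trace ((Rhat - Z) * W) = 0)
    (hc2 : x * ((Matrix.trace (Cbar * Z)).re - Δ₀ * z₁ +
        eigDesc hC.isHermitian ⟨N - 2, by omega⟩ * z₂) = 0)
    (hc3 : y₁ * ((Matrix.trace Z).re + z₂ - ((N : ℝ) - η₁) * z₁) = 0)
    (hc4 : y₂ * ((Matrix.trace Z).re + z₂ - ((N : ℝ) + η₂) * z₁) = 0)
    (hc5 : z₂ * (x * eigDesc hC.isHermitian ⟨N - 2, by omega⟩ + y₁ + y₂) = 0)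
    (hc6 : Matrix.trace (Z * (W - (x : ℂ) • Cbar - ((y₁ + y₂ : ℝ) : ℂ) • 1)) = 0)
    -- zero duality gap and positive optimal value
    (hz₁ : z₁ = (Matrix.trace (Rhat * W)).re) (hz₁pos : 0 < z₁)
    -- strict inequality
    (hstrict : x * eigDesc hC.isHermitian ⟨N - 2, by omega⟩ + y₁ + y₂ < 0) :
    x < 0 ∧ z₁ = (Matrix.trace (Cbar * Z)).re / Δ₀ ∧ z₂ = 0 ∧ 0 < y₁ + y₂ := by
  -- z₂ = 0
  have hz2 : z₂ = 0 := by
    rcases mul_eq_zero.mp hc5 with h | h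
    · exact h
    · exact absurd h (ne_of_lt hstrict)
  -- x < 0
  have hxlt : x < 0 := by
    rcases lt_or_eq_of_le hx with h | h
    · exact h
    · exfalso
      have hsum : y₁ + y₂ < 0 := by
        rw [h] at hstrict; simpa using hstrict
      have h1 : η₁ * y₁ ≥ 0 := mul_nonneg hη₁0 hy₁
      have h2 : η₂ * (-y₂) ≥ 0 := mul_nonneg hη₂ (by linarith)
      have h3 : (N : ℝ) * (y₁ + y₂) ≤ 0 :=
        mul_nonpos_of_nonneg_of_nonpos (by positivity) (le_of_lt hsum)
      rw [h] at hlin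
      nlinarith
  -- equality in hd1
  have heq : (Matrix.trace (Cbar * Z)).re = Δ₀ * z₁ := by
    have := mul_eq_zero.mp hc2
    rcases this with h | h
    · exact absurd h (ne_of_lt hxlt)
    · rw [hz2] at h; linarith
  have hz1eq : z₁ = (Matrix.trace (Cbar * Z)).re / Δ₀ := by
    rw [heq]; field_simp
  -- y₁ + y₂ > 0
  have hysum : 0 < y₁ + y₂ := by
    by_contra hle
    push_neg at hle
    have hc6' := hc6
    rw [Matrix.mul_sub, Matrix.mul_sub, Matrix.trace_sub, Matrix.trace_sub,
      Matrix.mul_smul, Matrix.trace_smul, Matrix.mul_smul, Matrix.trace_smul,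
      Matrix.mul_one] at hc6'
    have hre := congrArg Complex.re hc6'
    simp only [Complex.sub_re, Complex.zero_re, smul_eq_mul,
      Complex.re_ofReal_mul] at hre
    have h1 : 0 ≤ (Matrix.trace (Z * W)).re := trace_mul_re_nonneg' hZ hW
    have h2 : (Matrix.trace (Z * Cbar)).re = Δ₀ * z₁ := by
      rw [Matrix.trace_mul_comm]; exact heq
    have h3 : 0 < (Matrix.trace Z).re := by
      rw [hz2] at hd2
      nlinarith
    have h4 : x * (Matrix.trace (Z * Cbar)).re < 0 := by
      rw [h2]; exact mul_neg_of_neg_of_pos hxlt (by positivity)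
    have h5 : (y₁ + y₂) * (Matrix.trace Z).re ≤ 0 :=
      mul_nonpos_of_nonpos_of_nonneg hle (le_of_lt h3)
    linarith
  exact ⟨hxlt, hz1eq, hz2, hysum⟩
end
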